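/- arXiv:1801.08820 — 9 statements merged into one kernel-verified Lean document; each statement's English description precedes it below -/
import Mathlib

section
/- Let p be a prime, let a be in {1,...,p-1}, and let r be a positive integer with r ≡ a (mod p-1). Then the sum of the binomial coefficients C(r,j) over all integers j with 0 < j < r and j ≡ a (mod p-1) is congruent to 0 modulo p. -/
/-- For a prime `p`, `a ∈ {1,…,p-1}` and `r > 0` with `r ≡ a (mod p-1)`,
the sum of `C(r,j)` over `0 < j < r` with `j ≡ a (mod p-1)` vanishes modulo `p`. -/
theorem sum_choose_cong_zero (p : ℕ) (hp : p.Prime) (a r : ℕ)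
    (ha : 1 ≤ a) (ha' : a ≤ p - 1) (hr : 0 < r) (hra : r ≡ a [MOD p - 1]) :
    (∑ j ∈ (Finset.Ioo 0 r).filter (fun j => j % (p - 1) = a % (p - 1)), r.choose j)
      ≡ 0 [MOD p] := by
  classical
  haveI : Fact p.Prime := ⟨hp⟩
  set n := p - 1 with hn
  have hn0 : 0 < n := Nat.sub_pos_of_lt hp.one_lt
  set e := n - a % n with he
  have hamod : a % n < n := Nat.mod_lt _ hn0
  have hea : e + a % n = n := by omega
  -- divisibility criterion
  have key : ∀ j : ℕ, n ∣ (e + j) ↔ j % n = a % n := by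
    intro j
    constructor
    · intro h
      have h2 : e + j ≡ 0 [MOD n] := Nat.modEq_zero_iff_dvd.mpr h
      have h3 : e + a % n ≡ 0 [MOD n] := by
        rw [hea]; exact Nat.modEq_zero_iff_dvd.mpr dvd_rfl
      have h4 : e + j ≡ e + a % n [MOD n] := h2.trans h3.symm
      have h5 : j ≡ a % n [MOD n] := Nat.ModEq.add_left_cancel' e h4
      unfold Nat.ModEq at h5
      rwa [Nat.mod_mod_of_dvd _ dvd_rfl] at h5
    · intro h
      have h5 : j ≡ a % n [MOD n] := by
        unfold Nat.ModEq; rw [h, Nat.mod_mod_of_dvd _ dvd_rfl]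
      have h4 : e + j ≡ e + a % n [MOD n] := h5.add_left e
      rw [hea] at h4
      exact Nat.modEq_zero_iff_dvd.mp (h4.trans (Nat.modEq_zero_iff_dvd.mpr dvd_rfl))
  set K := ZMod p
  have hcard : Fintype.card K - 1 = n := by rw [ZMod.card]
  -- expansion of the units sum
  have expand : ∀ m : ℕ, (∑ x : Kˣ, (x : K) ^ e * (1 + (x : K)) ^ m)
      = -(∑ j ∈ Finset.range (m + 1), if j % n = a % n then (m.choose j : K) else 0) := by
    intro m
    have h1 : ∀ x : Kˣ, (x : K) ^ e * (1 + (x : K)) ^ m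
        = ∑ j ∈ Finset.range (m + 1), (m.choose j : K) * (x : K) ^ (e + j) := by
      intro x
      rw [add_comm (1 : K) (x : K), add_pow, Finset.mul_sum]
      refine Finset.sum_congr rfl fun j _ => ?_
      rw [one_pow, pow_add]; ring
    simp_rw [h1]
    rw [Finset.sum_comm]
    have h2 : ∀ j : ℕ, (∑ x : Kˣ, (m.choose j : K) * (x : K) ^ (e + j))
        = (m.choose j : K) * (if n ∣ (e + j) then (-1 : K) else 0) := by
      intro j
      rw [← Finset.mul_sum]
      congr 1
      have := FiniteField.sum_pow_units K (e + j)
      rw [hcard] at this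
      exact this
    simp_rw [h2]
    rw [← Finset.sum_neg_distrib]
    refine Finset.sum_congr rfl fun j _ => ?_
    by_cases hj : j % n = a % n
    · rw [if_pos hj, if_pos ((key j).mpr hj)]; ring
    · rw [if_neg hj, if_neg (fun hd => hj ((key j).mp hd))]; ring
  -- the units sums for exponents r and a agree
  have hsame : (∑ x : Kˣ, (x : K) ^ e * (1 + (x : K)) ^ r)
      = ∑ x : Kˣ, (x : K) ^ e * (1 + (x : K)) ^ a := by
    refine Finset.sum_congr rfl fun x _ => ?_
    by_cases hx : (1 + (x : K)) = 0
    · rw [hx, zero_pow hr.ne', zero_pow (by omega : a ≠ 0)]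
    · have hpow : ∀ m : ℕ, (1 + (x : K)) ^ m = (1 + (x : K)) ^ (m % n) := by
        intro m
        conv_lhs => rw [← Nat.div_add_mod m n]
        rw [pow_add, pow_mul, ZMod.pow_card_sub_one_eq_one hx, one_pow, one_mul]
      rw [hpow r, hpow a, hra]
  have hTeq : (∑ j ∈ Finset.range (r + 1), if j % n = a % n then (r.choose j : K) else 0)
      = ∑ j ∈ Finset.range (a + 1), if j % n = a % n then (a.choose j : K) else 0 := by
    have := (expand r).symm.trans (hsame.trans (expand a))
    exact neg_injective this
  -- compute the sum for exponent a
  have hTa : (∑ j ∈ Finset.range (a + 1), if j % n = a % n then (a.choose j : K) else 0)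
      = 1 + (if a % n = 0 then (1 : K) else 0) := by
    have hset : Finset.range (a + 1) = insert a (insert 0 (Finset.Ioo 0 a)) := by
      ext j; simp only [Finset.mem_range, Finset.mem_insert, Finset.mem_Ioo]; omega
    rw [hset, Finset.sum_insert (by simp [Finset.mem_Ioo]; omega),
      Finset.sum_insert (by simp [Finset.mem_Ioo])]
    have hmid : (∑ j ∈ Finset.Ioo 0 a, if j % n = a % n then (a.choose j : K) else 0) = 0 := by
      refine Finset.sum_eq_zero fun j hj => ?_
      rw [Finset.mem_Ioo] at hj
      rw [if_neg]
      intro hc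
      have hjn : j % n = j := Nat.mod_eq_of_lt (by omega)
      rcases Nat.lt_or_ge a n with h | h
      · rw [Nat.mod_eq_of_lt h, hjn] at hc; omega
      · have : a = n := le_antisymm ha' h
        rw [this, Nat.mod_self, hjn] at hc; omega
    rw [hmid, if_pos rfl, Nat.choose_self, Nat.cast_one, Nat.choose_zero_right, Nat.cast_one,
      Nat.zero_mod]
    by_cases h0 : a % n = 0
    · rw [if_pos h0.symm, if_pos h0]; ring
    · rw [if_neg (fun h => h0 h.symm), if_neg h0]; ring
  -- split the range (r+1) sum
  have hra' : r % n = a % n := hra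
  have hTr : (∑ j ∈ Finset.range (r + 1), if j % n = a % n then (r.choose j : K) else 0)
      = 1 + (if a % n = 0 then (1 : K) else 0)
        + ∑ j ∈ (Finset.Ioo 0 r).filter (fun j => j % n = a % n), (r.choose j : K) := by
    have hset : Finset.range (r + 1) = insert r (insert 0 (Finset.Ioo 0 r)) := by
      ext j; simp only [Finset.mem_range, Finset.mem_insert, Finset.mem_Ioo]; omega
    rw [hset, Finset.sum_insert (by simp [Finset.mem_Ioo]; omega),
      Finset.sum_insert (by simp [Finset.mem_Ioo]), Finset.sum_filter]
    rw [if_pos hra', Nat.choose_self, Nat.cast_one, Nat.choose_zero_right, Nat.zero_mod]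
    by_cases h0 : a % n = 0
    · rw [if_pos h0.symm, if_pos h0, Nat.cast_one]; ring
    · rw [if_neg (fun h => h0 h.symm), if_neg h0]; ring
  have hfinal : (∑ j ∈ (Finset.Ioo 0 r).filter (fun j => j % n = a % n), (r.choose j : K)) = 0 := by
    have := hTeq.trans hTa
    rw [hTr] at this
    linear_combination this
  rw [← Nat.cast_sum] at hfinal
  have := (ZMod.natCast_eq_zero_iff _ p).mp hfinal
  exact Nat.modEq_zero_iff_dvd.mpr this
end

section
/- Let p be a prime, let a be in {3,...,p-1}, and let r be an integer with r ≥ 2 and r ≡ a (mod p-1). If the sum of the base-p digits of r-2 is less than p, then the sum of the base-p digits of r-1 is less than p and the sum of the base-p digits of r is less than p. -/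
/-- Adding one increases the base-`b` digit sum by at most one. -/
lemma sum_digits_succ_le (b : ℕ) (hb : 2 ≤ b) (n : ℕ) :
    (Nat.digits b (n + 1)).sum ≤ (Nat.digits b n).sum + 1 := by
  induction n using Nat.strong_induction_on with
  | _ n ih =>
    rcases Nat.eq_zero_or_pos n with rfl | hn
    · rw [Nat.digits_def' hb (by norm_num : (0:ℕ) < 0 + 1)]
      simp [Nat.mod_eq_of_lt (by omega : 1 < b), Nat.div_eq_of_lt (by omega : 1 < b)]
    have hb0 : 0 < b := by omega
    have hdm := Nat.div_add_mod n b
    set k := n / b with hk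
    set m := n % b with hm
    have hmlt : m < b := Nat.mod_lt _ hb0
    rw [Nat.digits_def' hb (by omega : 0 < n + 1),
        Nat.digits_def' hb hn]
    simp only [List.sum_cons]
    by_cases he : m = b - 1
    · have hexp : b * (k + 1) = b * k + b := by ring
      have hn1 : n + 1 = b * (k + 1) := by omega
      have h1 : (n + 1) % b = 0 := by rw [hn1]; exact Nat.mul_mod_right _ _
      have h2 : (n + 1) / b = k + 1 := by
        rw [hn1, Nat.mul_div_cancel_left _ hb0]
      rw [h1, h2]
      have hkn : k < n := by rw [hk]; exact Nat.div_lt_self hn (by omega)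
      have := ih k hkn
      rw [← hm, ← hk]
      omega
    · have hn1 : n + 1 = b * k + (m + 1) := by omega
      have h1 : (n + 1) % b = m + 1 := by
        rw [hn1, Nat.mul_add_mod]; exact Nat.mod_eq_of_lt (by omega)
      have h2 : (n + 1) / b = k := by
        rw [hn1, Nat.mul_add_div hb0, Nat.div_eq_of_lt (by omega)]
        omega
      rw [h1, h2, ← hm, ← hk]
      omega

/-- For a prime `p`, `a ∈ {3,…,p-1}` and `r ≥ 2` with `r ≡ a (mod p-1)`:
if the base-`p` digit sum of `r-2` is less than `p`, then so are the digit sums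
of `r-1` and of `r`. -/
theorem digit_sum_minimality (p : ℕ) (hp : p.Prime) (a r : ℕ)
    (ha : 3 ≤ a) (ha' : a ≤ p - 1) (hr : 2 ≤ r) (hra : r ≡ a [MOD p - 1])
    (h : (Nat.digits p (r - 2)).sum < p) :
    (Nat.digits p (r - 1)).sum < p ∧ (Nat.digits p r).sum < p := by
  have hp2 : 2 ≤ p := hp.two_le
  have hp4 : 4 ≤ p := by omega
  -- digit sum of r-2 is ≡ r-2 ≡ a-2 (mod p-1)
  have hmod : p % (p - 1) = 1 := by
    obtain ⟨q, hq⟩ : ∃ q, p = q + 1 := ⟨p - 1, by omega⟩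
    subst hq
    simp only [Nat.add_sub_cancel]
    rw [Nat.add_mod_left]
    exact Nat.mod_eq_of_lt (by omega)
  have hc : (r - 2) ≡ (Nat.digits p (r - 2)).sum [MOD p - 1] :=
    Nat.modEq_digits_sum (p - 1) p hmod (r - 2)
  have hra2 : (r - 2) ≡ (a - 2) [MOD p - 1] := by
    have : (r - 2) + 2 ≡ (a - 2) + 2 [MOD p - 1] := by
      rw [Nat.sub_add_cancel hr, Nat.sub_add_cancel (by omega : 2 ≤ a)]
      exact hra
    exact (Nat.ModEq.add_right_cancel' 2 this)
  have hkey : (Nat.digits p (r - 2)).sum = a - 2 := by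
    have h1 : (Nat.digits p (r - 2)).sum ≡ (a - 2) [MOD p - 1] :=
      hc.symm.trans hra2
    have h2 : (a - 2) % (p - 1) = a - 2 := Nat.mod_eq_of_lt (by omega)
    have h3 := h1  -- sum % (p-1) = (a-2) % (p-1)
    unfold Nat.ModEq at h3
    rw [h2] at h3
    rcases Nat.lt_or_ge (Nat.digits p (r - 2)).sum (p - 1) with hlt | hge
    · rw [Nat.mod_eq_of_lt hlt] at h3; exact h3
    · have hs : (Nat.digits p (r - 2)).sum = p - 1 := by omega
      rw [hs, Nat.mod_self] at h3
      omega
  have step1 := sum_digits_succ_le p hp2 (r - 2)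
  have step2 := sum_digits_succ_le p hp2 (r - 1)
  have e1 : r - 2 + 1 = r - 1 := by omega
  have e2 : r - 1 + 1 = r := by omega
  rw [e1] at step1
  rw [e2] at step2
  omega
end

section
/- Let p be a prime, r ≥ p+1 an integer, and let F(X,Y) = Σ_{0 ≤ j ≤ r} c_j X^{r-j} Y^j be a homogeneous polynomial of degree r over F_p such that any two indices j, k with c_j ≠ 0 and c_k ≠ 0 satisfy j ≡ k (mod p-1). Then θ := X^p Y - X Y^p divides F in F_p[X,Y] if and only if c_0 = 0, c_r = 0, and Σ_{j} c_j = 0 in F_p. -/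
open MvPolynomial

private lemma theta_dvd_step (p a b : ℕ) :
    (X 0 ^ p * X 1 - X 0 * X 1 ^ p : MvPolynomial (Fin 2) (ZMod p)) ∣
      X 0 ^ (a + p) * X 1 ^ (b + 1) - X 0 ^ (a + 1) * X 1 ^ (b + p) :=
  ⟨X 0 ^ a * X 1 ^ b, by ring⟩

private lemma theta_dvd_shift (p : ℕ) (hp : 2 ≤ p) (t a b : ℕ) :
    (X 0 ^ p * X 1 - X 0 * X 1 ^ p : MvPolynomial (Fin 2) (ZMod p)) ∣
      X 0 ^ (a + 1 + t * (p - 1)) * X 1 ^ (b + 1)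
        - X 0 ^ (a + 1) * X 1 ^ (b + 1 + t * (p - 1)) := by
  obtain ⟨q, rfl⟩ : ∃ q, p = q + 1 := ⟨p - 1, by omega⟩
  simp only [Nat.add_sub_cancel]
  induction t generalizing b with
  | zero => simp
  | succ t ih =>
      have key : (X 0 ^ (a + 1 + (t + 1) * q) * X 1 ^ (b + 1)
            - X 0 ^ (a + 1) * X 1 ^ (b + 1 + (t + 1) * q)
            : MvPolynomial (Fin 2) (ZMod (q + 1)))
          = (X 0 ^ ((a + t * q) + (q + 1)) * X 1 ^ (b + 1)
              - X 0 ^ ((a + t * q) + 1) * X 1 ^ (b + (q + 1)))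
            + (X 0 ^ (a + 1 + t * q) * X 1 ^ ((b + q) + 1)
              - X 0 ^ (a + 1) * X 1 ^ ((b + q) + 1 + t * q)) := by
        ring
      rw [key]
      exact dvd_add (theta_dvd_step (q + 1) (a + t * q) b) (ih (b + q))

private lemma theta_dvd_mono_aux (p : ℕ) (hp : 2 ≤ p) (r j k : ℕ)
    (hj1 : 1 ≤ j) (hk1 : 1 ≤ k) (hkr : k < r) (hjk : j ≤ k)
    (hmod : j % (p - 1) = k % (p - 1)) :
    (X 0 ^ p * X 1 - X 0 * X 1 ^ p : MvPolynomial (Fin 2) (ZMod p)) ∣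
      X 0 ^ (r - j) * X 1 ^ j - X 0 ^ (r - k) * X 1 ^ k := by
  have hd : (p - 1) ∣ k - j := (Nat.modEq_iff_dvd' hjk).mp hmod
  obtain ⟨t, ht⟩ := hd
  have h4 := theta_dvd_shift p hp t (r - k - 1) (j - 1)
  set m := t * (p - 1) with hm
  have hm' : m = k - j := by rw [hm, mul_comm]; exact ht.symm
  have e1 : r - k - 1 + 1 + m = r - j := by omega
  have e2 : j - 1 + 1 = j := by omega
  rw [e1, e2] at h4
  have e4 : j + m = k := by omega
  have e3 : r - k - 1 + 1 = r - k := by omega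
  rw [e4, e3] at h4
  exact h4

private lemma theta_dvd_mono (p : ℕ) (hp : 2 ≤ p) (r j k : ℕ)
    (hj1 : 1 ≤ j) (hjr : j < r) (hk1 : 1 ≤ k) (hkr : k < r)
    (hmod : j % (p - 1) = k % (p - 1)) :
    (X 0 ^ p * X 1 - X 0 * X 1 ^ p : MvPolynomial (Fin 2) (ZMod p)) ∣
      X 0 ^ (r - j) * X 1 ^ j - X 0 ^ (r - k) * X 1 ^ k := by
  rcases le_total j k with h | h
  · exact theta_dvd_mono_aux p hp r j k hj1 hk1 hkr h hmod
  · exact dvd_sub_comm.mp (theta_dvd_mono_aux p hp r k j hk1 hj1 hjr h hmod.symm)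

/-- Criterion for divisibility by `θ = X^p Y - X Y^p` of a homogeneous polynomial of
degree `r ≥ p+1` whose nonzero coefficients all lie in a single residue class mod `p-1`. -/
theorem theta_dvd_iff (p : ℕ) (hp : p.Prime) (r : ℕ) (hr : p + 1 ≤ r)
    (c : ℕ → ZMod p)
    (hc : ∀ j ≤ r, ∀ k ≤ r, c j ≠ 0 → c k ≠ 0 → j % (p - 1) = k % (p - 1)) :
    ((X 0 ^ p * X 1 - X 0 * X 1 ^ p : MvPolynomial (Fin 2) (ZMod p)) ∣
        ∑ j ∈ Finset.range (r + 1), C (c j) * X 0 ^ (r - j) * X 1 ^ j) ↔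
      (c 0 = 0 ∧ c r = 0 ∧ ∑ j ∈ Finset.range (r + 1), c j = 0) := by
  have hp0 : p ≠ 0 := hp.ne_zero
  constructor
  · rintro ⟨g, hg⟩
    have ev : ∀ v : Fin 2 → ZMod p,
        v 0 ^ p * v 1 - v 0 * v 1 ^ p = 0 →
        ∑ j ∈ Finset.range (r + 1), c j * v 0 ^ (r - j) * v 1 ^ j = 0 := by
      intro v hv
      have := congrArg (eval v) hg
      simp only [map_sum, map_mul, map_sub, map_pow, eval_C, eval_X] at this
      rw [this, hv, zero_mul]
    have h0 : c 0 = 0 := by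
      have := ev ![1, 0] (by norm_num [zero_pow hp0])
      rw [Finset.sum_eq_single 0] at this
      · simpa using this
      · intro j hj hj0
        simp [zero_pow hj0]
      · simp
    have hrr : c r = 0 := by
      have := ev ![0, 1] (by norm_num [zero_pow hp0])
      rw [Finset.sum_eq_single r] at this
      · simpa using this
      · intro j hj hjr
        have : r - j ≠ 0 := by
          have := Finset.mem_range.mp hj; omega
        simp [zero_pow this]
      · simp
    have hs : ∑ j ∈ Finset.range (r + 1), c j = 0 := by
      have := ev ![1, 1] (by norm_num)
      simpa using this
    exact ⟨h0, hrr, hs⟩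
  · rintro ⟨h0, hr0, hsum⟩
    by_cases hall : ∀ j ∈ Finset.range (r + 1), c j = 0
    · have hz : (∑ j ∈ Finset.range (r + 1),
          (C (c j) * X 0 ^ (r - j) * X 1 ^ j : MvPolynomial (Fin 2) (ZMod p))) = 0 :=
        Finset.sum_eq_zero fun j hj => by rw [hall j hj]; simp
      rw [hz]; exact dvd_zero _
    · push_neg at hall
      obtain ⟨j0, hj0mem, hj0⟩ := hall
      have hj0r : j0 ≤ r := by
        have := Finset.mem_range.mp hj0mem; omega
      have hj01 : 1 ≤ j0 := by
        by_contra h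
        have : j0 = 0 := by omega
        exact hj0 (this ▸ h0)
      have hj0lt : j0 < r := by
        rcases lt_or_eq_of_le hj0r with h | h
        · exact h
        · exact absurd (h ▸ hr0) hj0
      have hCsum : (∑ j ∈ Finset.range (r + 1), (C (c j) : MvPolynomial (Fin 2) (ZMod p))) = 0 := by
        rw [← map_sum, hsum, map_zero]
      have key : (∑ j ∈ Finset.range (r + 1),
            (C (c j) * X 0 ^ (r - j) * X 1 ^ j : MvPolynomial (Fin 2) (ZMod p)))
          = ∑ j ∈ Finset.range (r + 1),
              C (c j) * (X 0 ^ (r - j) * X 1 ^ j - X 0 ^ (r - j0) * X 1 ^ j0) := by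
        have : ∑ j ∈ Finset.range (r + 1),
              (C (c j) * (X 0 ^ (r - j) * X 1 ^ j - X 0 ^ (r - j0) * X 1 ^ j0)
                : MvPolynomial (Fin 2) (ZMod p))
            = (∑ j ∈ Finset.range (r + 1), C (c j) * X 0 ^ (r - j) * X 1 ^ j)
              - (∑ j ∈ Finset.range (r + 1), (C (c j) : MvPolynomial (Fin 2) (ZMod p)))
                * (X 0 ^ (r - j0) * X 1 ^ j0) := by
          rw [Finset.sum_mul, ← Finset.sum_sub_distrib]
          exact Finset.sum_congr rfl fun j _ => by ring
        rw [this, hCsum, zero_mul, sub_zero]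
      rw [key]
      apply Finset.dvd_sum
      intro j hj
      by_cases hcj : c j = 0
      · rw [hcj]; simp
      · have hjr : j ≤ r := by
          have := Finset.mem_range.mp hj; omega
        have hmod := hc j hjr j0 hj0r hcj hj0
        have hj1 : 1 ≤ j := by
          by_contra h
          have : j = 0 := by omega
          exact hcj (this ▸ h0)
        have hjlt : j < r := by
          rcases lt_or_eq_of_le hjr with h | h
          · exact h
          · exact absurd (h ▸ hr0) hcj
        exact Dvd.dvd.mul_left
          (theta_dvd_mono p hp.two_le r j j0 hj1 hjlt hj01 hj0lt hmod) _
end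

section
/- Let p be a prime, r ≥ 2p+2 an integer, and let F(X,Y) = Σ_{0 ≤ j ≤ r} c_j X^{r-j} Y^j be a homogeneous polynomial of degree r over F_p such that any two indices j, k with c_j ≠ 0 and c_k ≠ 0 satisfy j ≡ k (mod p-1). Then θ^2 divides F in F_p[X,Y], where θ = X^p Y - X Y^p, if and only if c_0 = c_1 = c_{r-1} = c_r = 0 and Σ_j c_j = 0 and Σ_j j·c_j = 0 in F_p. -/
open MvPolynomial

private lemma theta_keyA {R : Type*} [CommRing R] (x y : R) (q : ℕ) :
    ∀ n : ℕ, ∃ h : R, x ^ (q * n) * y ^ q =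
      y ^ (q * n + q) + (n : R) * y ^ (q * n) * (x ^ q - y ^ q) +
        (x ^ q - y ^ q) ^ 2 * h
  | 0 => ⟨0, by simp⟩
  | (n + 1) => by
    obtain ⟨h, ih⟩ := theta_keyA x y q n
    refine ⟨y ^ q * h + (n : R) * y ^ (q * n) + (x ^ q - y ^ q) * h, ?_⟩
    have e : q * (n + 1) = q * n + q := by ring
    rw [e]
    push_cast
    linear_combination (x ^ q) * ih

/-- Criterion for divisibility by `θ² = (X^p Y - X Y^p)²` of a homogeneous polynomial of
degree `r ≥ 2p+2` whose nonzero coefficients all lie in a single residue class mod `p-1`. -/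
theorem theta_sq_dvd_iff (p : ℕ) (hp : p.Prime) (r : ℕ) (hr : 2 * p + 2 ≤ r)
    (c : ℕ → ZMod p)
    (hc : ∀ j ≤ r, ∀ k ≤ r, c j ≠ 0 → c k ≠ 0 → j % (p - 1) = k % (p - 1)) :
    ((X 0 ^ p * X 1 - X 0 * X 1 ^ p : MvPolynomial (Fin 2) (ZMod p)) ^ 2 ∣
        ∑ j ∈ Finset.range (r + 1), C (c j) * X 0 ^ (r - j) * X 1 ^ j) ↔
      (c 0 = 0 ∧ c 1 = 0 ∧ c (r - 1) = 0 ∧ c r = 0 ∧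
        (∑ j ∈ Finset.range (r + 1), c j = 0) ∧
        (∑ j ∈ Finset.range (r + 1), (j : ZMod p) * c j = 0)) := by
  haveI := Fact.mk hp
  set θ : MvPolynomial (Fin 2) (ZMod p) := X 0 ^ p * X 1 - X 0 * X 1 ^ p with hθ
  set F : MvPolynomial (Fin 2) (ZMod p) :=
    ∑ j ∈ Finset.range (r + 1), C (c j) * X 0 ^ (r - j) * X 1 ^ j with hF
  have hp0 : p ≠ 0 := hp.ne_zero
  have hp2 : 2 ≤ p := hp.two_le
  have hr6 : 6 ≤ r := by omega
  constructor
  · -- Forward direction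
    rintro ⟨G, hG⟩
    have hzF : ∀ z : Fin 2 → ZMod p, eval z θ = 0 → eval z F = 0 := by
      intro z hz
      rw [hG, map_mul, map_pow, hz]
      ring
    have hzD : ∀ z : Fin 2 → ZMod p, eval z θ = 0 → ∀ i, eval z (pderiv i F) = 0 := by
      intro z hz i
      rw [hG, pderiv_mul, pderiv_pow]
      simp [hz]
    have ht10 : eval ![(1 : ZMod p), 0] θ = 0 := by simp [hθ, zero_pow hp0]
    have ht01 : eval ![(0 : ZMod p), 1] θ = 0 := by simp [hθ, zero_pow hp0]
    have ht11 : eval ![(1 : ZMod p), 1] θ = 0 := by simp [hθ]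
    have e10 : eval ![(1 : ZMod p), 0] F = c 0 := by
      rw [hF, map_sum, Finset.sum_eq_single 0]
      · simp
      · intro j hj hj0
        simp [zero_pow hj0]
      · intro h; exact absurd (Finset.mem_range.mpr (by omega)) h
    have e01 : eval ![(0 : ZMod p), 1] F = c r := by
      rw [hF, map_sum, Finset.sum_eq_single r]
      · simp
      · intro j hj hjr
        have : r - j ≠ 0 := by simp only [Finset.mem_range] at hj; omega
        simp [zero_pow this]
      · intro h; exact absurd (Finset.mem_range.mpr (by omega)) h
    have e11 : eval ![(1 : ZMod p), 1] F = ∑ j ∈ Finset.range (r+1), c j := by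
      rw [hF, map_sum]
      exact Finset.sum_congr rfl fun j hj => by simp
    have pd1 : ∀ (a b : ℕ) (d : ZMod p), pderiv (1 : Fin 2) (C d * X 0 ^ a * X 1 ^ b)
        = (b : MvPolynomial (Fin 2) (ZMod p)) * (C d * X 0 ^ a * X 1 ^ (b-1)) := by
      intro a b d
      rw [pderiv_mul, pderiv_mul, pderiv_pow, pderiv_pow, pderiv_C]
      simp
      ring
    have pd0 : ∀ (a b : ℕ) (d : ZMod p), pderiv (0 : Fin 2) (C d * X 0 ^ a * X 1 ^ b)
        = (a : MvPolynomial (Fin 2) (ZMod p)) * (C d * X 0 ^ (a-1) * X 1 ^ b) := by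
      intro a b d
      rw [pderiv_mul, pderiv_mul, pderiv_pow, pderiv_pow, pderiv_C]
      simp
      ring
    have d10 : eval ![(1 : ZMod p), 0] (pderiv 1 F) = c 1 := by
      rw [hF, map_sum]
      simp only [pd1]
      rw [map_sum, Finset.sum_eq_single 1]
      · simp
      · intro j hj hj1
        rcases eq_or_ne j 0 with rfl | hj0
        · simp
        · have : j - 1 ≠ 0 := by omega
          simp [zero_pow this]
      · intro h; exact absurd (Finset.mem_range.mpr (by omega)) h
    have d01 : eval ![(0 : ZMod p), 1] (pderiv 0 F) = c (r-1) := by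
      rw [hF, map_sum]
      simp only [pd0]
      rw [map_sum, Finset.sum_eq_single (r-1)]
      · have : r - (r-1) = 1 := by omega
        rw [this]
        simp
      · intro j hj hj1
        rcases eq_or_ne j r with rfl | hjr
        · simp
        · have hjlt : j ≤ r := by simp only [Finset.mem_range] at hj; omega
          have : r - j - 1 ≠ 0 := by omega
          simp [zero_pow this]
      · intro h; exact absurd (Finset.mem_range.mpr (by omega)) h
    have d11 : eval ![(1 : ZMod p), 1] (pderiv 1 F)
        = ∑ j ∈ Finset.range (r+1), (j : ZMod p) * c j := by
      rw [hF, map_sum]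
      simp only [pd1]
      rw [map_sum]
      exact Finset.sum_congr rfl fun j hj => by simp
    exact ⟨by rw [← e10]; exact hzF _ ht10,
           by rw [← d10]; exact hzD _ ht10 1,
           by rw [← d01]; exact hzD _ ht01 0,
           by rw [← e01]; exact hzF _ ht01,
           by rw [← e11]; exact hzF _ ht11,
           by rw [← d11]; exact hzD _ ht11 1⟩
  · -- Backward direction
    rintro ⟨h0, h1, hrm, hrr, hs, hjs⟩
    let R := MvPolynomial (Fin 2) (ZMod p)
    set q : ℕ := p - 1 with hqdef
    have hq1 : 1 ≤ q := by omega
    set Q : R := X 0 ^ q - X 1 ^ q with hQ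
    -- primality of the variables
    have hP0 : Prime (X 0 : R) := by
      rw [← MulEquiv.prime_iff (finSuccEquiv (ZMod p) 1).toMulEquiv]
      show Prime ((finSuccEquiv (ZMod p) 1) (X 0))
      rw [finSuccEquiv_X_zero]
      exact Polynomial.prime_X
    have hP1 : Prime (X 1 : R) := by
      have h := (MulEquiv.prime_iff
        (renameEquiv (ZMod p) (Equiv.swap (0:Fin 2) 1)).toMulEquiv).mpr hP0
      simpa using h
    -- non-divisibilities
    have hndXY : ¬ (X 0 : R) ∣ X 1 := by
      intro hd
      obtain ⟨t, ht⟩ := hd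
      have := congrArg (eval ![(0 : ZMod p), 1]) ht
      simp at this
    have hndXQ : ¬ (X 0 : R) ∣ Q := by
      intro hd
      obtain ⟨t, ht⟩ := hd
      have := congrArg (eval ![(0 : ZMod p), 1]) ht
      simp [hQ, zero_pow (by omega : q ≠ 0)] at this
    have hndYQ : ¬ (X 1 : R) ∣ Q := by
      intro hd
      obtain ⟨t, ht⟩ := hd
      have := congrArg (eval ![(1 : ZMod p), 0]) ht
      simp [hQ, zero_pow (by omega : q ≠ 0)] at this
    have hXY : IsRelPrime (X 0 : R) (X 1) := hP0.irreducible.isRelPrime_iff_not_dvd.mpr hndXY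
    have hXQ : IsRelPrime (X 0 : R) Q := hP0.irreducible.isRelPrime_iff_not_dvd.mpr hndXQ
    have hYQ : IsRelPrime (X 1 : R) Q := hP1.irreducible.isRelPrime_iff_not_dvd.mpr hndYQ
    -- divisibility by X 0 ^ 2 and X 1 ^ 2
    have hdX : (X 0 : R) ^ 2 ∣ F := by
      rw [hF]
      apply Finset.dvd_sum
      intro j hj
      rcases eq_or_ne j r with rfl | hjr
      · simp [hrr]
      rcases eq_or_ne j (r-1) with rfl | hjr1
      · simp [hrm]
      have : 2 ≤ r - j := by simp only [Finset.mem_range] at hj; omega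
      exact ((pow_dvd_pow (X 0 : R) this).mul_left _).mul_right _
    have hdY : (X 1 : R) ^ 2 ∣ F := by
      rw [hF]
      apply Finset.dvd_sum
      intro j hj
      rcases eq_or_ne j 0 with rfl | hj0
      · simp [h0]
      rcases eq_or_ne j 1 with rfl | hj1
      · simp [h1]
      exact (pow_dvd_pow (X 1 : R) (by omega : 2 ≤ j)).mul_left _
    -- the common residue β of r - j
    obtain ⟨β, hβ⟩ : ∃ β, ∀ j ≤ r, c j ≠ 0 → (r - j) % q = β := by
      by_cases hex : ∃ j0, j0 ≤ r ∧ c j0 ≠ 0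
      · obtain ⟨j0, hj0r, hj0⟩ := hex
        refine ⟨(r - j0) % q, fun j hjr hcj => ?_⟩
        have hmod : j % q = j0 % q := hc j hjr j0 hj0r hcj hj0
        have hm : Nat.ModEq q j j0 := hmod
        have : Nat.ModEq q (r - j) (r - j0) := by
          apply Nat.ModEq.add_right_cancel hm
          have h1 : (r - j) + j = r := by omega
          have h2 : (r - j0) + j0 = r := by omega
          rw [h1, h2]
        exact this
      · exact ⟨0, fun j hjr hcj => absurd ⟨j, hjr, hcj⟩ hex⟩
    -- termwise decomposition modulo Q ^ 2
    have hterm : ∀ j : ℕ, ∃ h : R, j ∈ Finset.range (r+1) →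
        C (c j) * X 0 ^ (r - j) * X 1 ^ j * X 1 ^ q =
          C (c j) * (X 0 ^ β * X 1 ^ (r - β + q))
          + C (c j * (((r - j) / q : ℕ) : ZMod p)) * (X 0 ^ β * X 1 ^ (r - β)) * Q
          + Q ^ 2 * h := by
      intro j
      rcases eq_or_ne (c j) 0 with h | h
      · exact ⟨0, fun _ => by simp [h]⟩
      obtain ⟨w, hA⟩ := theta_keyA (X 0 : R) (X 1) q ((r - j) / q)
      refine ⟨C (c j) * X 0 ^ β * X 1 ^ j * w, fun hj => ?_⟩
      have hjr : j ≤ r := by simp only [Finset.mem_range] at hj; omega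
      have hβj : (r - j) % q = β := hβ j hjr h
      have hdm : q * ((r - j) / q) + β = r - j := by
        conv_rhs => rw [← Nat.div_add_mod (r - j) q]
        rw [hβj]
      set u := (r - j) / q with hu
      rw [show r - j = β + q * u by omega,
          show r - β + q = j + (q * u + q) by omega,
          show r - β = j + q * u by omega,
          map_mul, C_eq_coe_nat]
      linear_combination (C (c j) * X 0 ^ β * X 1 ^ j) * hA
    choose W hW using hterm
    -- the second coefficient sum vanishes
    have hsum3 : (∑ j ∈ Finset.range (r+1), c j * (((r - j) / q : ℕ) : ZMod p)) = 0 := by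
      have hcongr : ∀ j ∈ Finset.range (r+1), c j * (((r - j) / q : ℕ) : ZMod p)
          = (j : ZMod p) * c j - ((r : ZMod p) - (β : ZMod p)) * c j := by
        intro j hj
        rcases eq_or_ne (c j) 0 with h | h
        · simp [h]
        have hjr : j ≤ r := by simp only [Finset.mem_range] at hj; omega
        have hβj : (r - j) % q = β := hβ j hjr h
        have hdm : q * ((r - j) / q) + β = r - j := by
          conv_rhs => rw [← Nat.div_add_mod (r - j) q]
          rw [hβj]
        have hcast : (q : ZMod p) * (((r - j) / q : ℕ) : ZMod p) + (β : ZMod p) + (j : ZMod p)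
            = (r : ZMod p) := by
          have hn : q * ((r - j) / q) + β + j = r := by omega
          exact_mod_cast congrArg (Nat.cast : ℕ → ZMod p) hn
        have hq' : (q : ZMod p) = -1 := by
          rw [hqdef]
          push_cast [Nat.cast_sub hp.one_le]
          simp [ZMod.natCast_self]
        linear_combination (-(c j)) * hcast + (c j * (((r - j) / q : ℕ) : ZMod p)) * hq'
      rw [Finset.sum_congr rfl hcongr, Finset.sum_sub_distrib, hjs, ← Finset.mul_sum, hs]
      ring
    -- Q ^ 2 divides F
    have hdQmul : Q ^ 2 ∣ F * X 1 ^ q := by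
      have hA0 : ∑ j ∈ Finset.range (r+1), C (c j) * (X 0 ^ β * X 1 ^ (r - β + q)) = (0 : R) := by
        rw [← Finset.sum_mul, ← map_sum, hs, map_zero, zero_mul]
      have hB0 : ∑ j ∈ Finset.range (r+1),
          C (c j * (((r - j) / q : ℕ) : ZMod p)) * (X 0 ^ β * X 1 ^ (r - β)) * Q = (0 : R) := by
        rw [← Finset.sum_mul, ← Finset.sum_mul, ← map_sum, hsum3, map_zero, zero_mul, zero_mul]
      refine ⟨∑ j ∈ Finset.range (r+1), W j, ?_⟩
      calc F * X 1 ^ q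
          = ∑ j ∈ Finset.range (r+1), C (c j) * X 0 ^ (r - j) * X 1 ^ j * X 1 ^ q := by
            rw [hF, Finset.sum_mul]
        _ = ∑ j ∈ Finset.range (r+1), (C (c j) * (X 0 ^ β * X 1 ^ (r - β + q))
              + C (c j * (((r - j) / q : ℕ) : ZMod p)) * (X 0 ^ β * X 1 ^ (r - β)) * Q
              + Q ^ 2 * W j) := Finset.sum_congr rfl (fun j hj => hW j hj)
        _ = (∑ j ∈ Finset.range (r+1), C (c j) * (X 0 ^ β * X 1 ^ (r - β + q)))
              + (∑ j ∈ Finset.range (r+1),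
                  C (c j * (((r - j) / q : ℕ) : ZMod p)) * (X 0 ^ β * X 1 ^ (r - β)) * Q)
              + ∑ j ∈ Finset.range (r+1), Q ^ 2 * W j := by
            simp only [Finset.sum_add_distrib]
        _ = Q ^ 2 * ∑ j ∈ Finset.range (r+1), W j := by
            rw [hA0, hB0, Finset.mul_sum]
            ring
    have hdQ : Q ^ 2 ∣ F := (hYQ.symm.pow).dvd_of_dvd_mul_right hdQmul
    -- assembling
    have hθfac : θ = X 0 * X 1 * Q := by
      have hpow0 : (X 0 : R) ^ p = X 0 ^ q * X 0 := by
        rw [← pow_succ, show q + 1 = p by omega]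
      have hpow1 : (X 1 : R) ^ p = X 1 ^ q * X 1 := by
        rw [← pow_succ, show q + 1 = p by omega]
      rw [hθ, hQ, hpow0, hpow1]
      ring
    rw [hθfac, mul_pow, mul_pow]
    exact ((hXQ.pow).mul_left (hYQ.pow)).mul_dvd ((hXY.pow).mul_dvd hdX hdY) hdQ
end

section
/- Let p be a prime and r a positive integer whose sum of base-p digits is at least p. Then the p+1 polynomials X^r, Y^r, and (kX+Y)^r for k in F_p^* are linearly independent over F_p in the polynomial ring F_p[X,Y]. -/
open MvPolynomial

lemma not_dvd_choose_of_lt' {p a s : ℕ} (hp : p.Prime) (ha : a < p) (hs : s ≤ a) :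
    ¬ p ∣ a.choose s := by
  intro hdvd
  have h1 : a.choose s * (s.factorial * (a - s).factorial) = a.factorial := by
    rw [← mul_assoc]; exact Nat.choose_mul_factorial_mul_factorial hs
  have h2 : p ∣ a.factorial := h1 ▸ hdvd.mul_right _
  have := (Nat.Prime.dvd_factorial hp).mp h2
  omega

/-- For any `s ≤ digit sum of r`, there is `i` with digit sum `s` and `p ∤ choose r i`. -/
lemma exists_subdigit' (p : ℕ) (hp : p.Prime) : ∀ r s : ℕ, s ≤ (Nat.digits p r).sum →
    ∃ i, (Nat.digits p i).sum = s ∧ ¬ (p ∣ r.choose i) := by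
  haveI : Fact p.Prime := ⟨hp⟩
  intro r
  induction r using Nat.strong_induction_on with
  | _ r ih =>
  intro s hs
  rcases Nat.eq_zero_or_pos r with hr | hr
  · subst hr
    simp at hs
    exact ⟨0, by simp [hs], by simp [hp.one_lt.ne']⟩
  have hp2 : 2 ≤ p := hp.two_le
  have hdig : Nat.digits p r = r % p :: Nat.digits p (r / p) :=
    Nat.digits_def' hp.one_lt hr
  rw [hdig, List.sum_cons] at hs
  by_cases hsa : s ≤ r % p
  · refine ⟨s, ?_, ?_⟩
    · rcases Nat.eq_zero_or_pos s with h0 | h0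
      · simp [h0]
      · rw [Nat.digits_def' hp.one_lt h0,
          Nat.mod_eq_of_lt (lt_of_le_of_lt hsa (Nat.mod_lt _ (by omega))),
          Nat.div_eq_of_lt (lt_of_le_of_lt hsa (Nat.mod_lt _ (by omega)))]
        simp
    · intro hdvd
      have hlt : s < p := lt_of_le_of_lt hsa (Nat.mod_lt _ (by omega))
      have heq := Choose.choose_modEq_choose_mod_mul_choose_div_nat (n := r) (k := s) (p := p)
      rw [Nat.mod_eq_of_lt hlt, Nat.div_eq_of_lt hlt, Nat.choose_zero_right, mul_one] at heq
      have hdvd2 : p ∣ (r % p).choose s :=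
        (Nat.modEq_zero_iff_dvd.mp ((heq.symm.trans (Nat.modEq_zero_iff_dvd.mpr hdvd))))
      exact not_dvd_choose_of_lt' hp (Nat.mod_lt _ (by omega)) hsa hdvd2
  · push_neg at hsa
    have hq : r / p < r := Nat.div_lt_self hr hp.one_lt
    obtain ⟨i', hi1, hi2⟩ := ih (r / p) hq (s - r % p) (by omega)
    have halt : r % p < p := Nat.mod_lt _ (by omega)
    have hi'pos : 0 < i' := by
      rcases Nat.eq_zero_or_pos i' with h0 | h0
      · simp [h0] at hi1; omega
      · exact h0
    have hmod : (p * i' + r % p) % p = r % p := by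
      rw [Nat.mul_add_mod, Nat.mod_eq_of_lt halt]
    have hdiv : (p * i' + r % p) / p = i' := by
      rw [Nat.mul_add_div (by omega), Nat.div_eq_of_lt halt, add_zero]
    refine ⟨p * i' + r % p, ?_, ?_⟩
    · have hpos : 0 < p * i' + r % p := by positivity
      rw [Nat.digits_def' hp.one_lt hpos, hmod, hdiv, List.sum_cons, hi1]
      omega
    · intro hdvd
      have heq := Choose.choose_modEq_choose_mod_mul_choose_div_nat
        (n := r) (k := p * i' + r % p) (p := p)
      rw [hmod, hdiv, Nat.choose_self, one_mul] at heq
      exact hi2 (Nat.modEq_zero_iff_dvd.mp (heq.symm.trans (Nat.modEq_zero_iff_dvd.mpr hdvd)))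

/-- For each residue `j ∈ [1, p-1]`, there is `0 < i < r` with `i ≡ j [MOD p-1]`
and `p ∤ choose r i`. -/
lemma exists_exponent' (p r : ℕ) (hp : p.Prime) (hdig : p ≤ (Nat.digits p r).sum)
    (j : ℕ) (hj1 : 1 ≤ j) (hj2 : j ≤ p - 1) :
    ∃ i, 0 < i ∧ i < r ∧ i ≡ j [MOD p - 1] ∧ ¬ p ∣ r.choose i := by
  have hp2 := hp.two_le
  obtain ⟨i, hi1, hi2⟩ := exists_subdigit' p hp r j (by omega)
  have hle : i ≤ r := by
    by_contra hcon
    push_neg at hcon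
    exact hi2 (by simp [Nat.choose_eq_zero_of_lt hcon])
  have hipos : 0 < i := by
    rcases Nat.eq_zero_or_pos i with h0 | h0
    · simp [h0] at hi1; omega
    · exact h0
  have hine : i ≠ r := by
    intro hir
    rw [hir] at hi1
    omega
  have hme : i ≡ j [MOD p - 1] := by
    rcases Nat.lt_or_ge p 3 with h3 | h3
    · interval_cases p
      · simp [Nat.ModEq, Nat.mod_one]
    · have hm : p % (p - 1) = 1 := by
        calc p % (p - 1) = (p - 1 + 1) % (p - 1) := by rw [Nat.sub_add_cancel (by omega)]
          _ = 1 % (p - 1) := Nat.add_mod_left _ _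
          _ = 1 := Nat.mod_eq_of_lt (by omega)
      have := Nat.modEq_digits_sum (p - 1) p hm i
      rw [hi1] at this
      exact this
  exact ⟨i, hipos, lt_of_le_of_ne hle hine, hme, hi2⟩

lemma pow_eq_pow_of_modEq' {p : ℕ} [Fact p.Prime] {u : ZMod p} (hu : u ≠ 0) {i j : ℕ}
    (hij : i ≡ j [MOD p - 1]) : u ^ i = u ^ j := by
  have h1 : u ^ (p - 1) = 1 := ZMod.pow_card_sub_one_eq_one hu
  have key : ∀ n : ℕ, u ^ n = u ^ (n % (p - 1)) := by
    intro n
    conv_lhs => rw [← Nat.div_add_mod n (p - 1)]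
    rw [pow_add, pow_mul, h1, one_pow, one_mul]
  rw [key i, key j, hij]

/-- The coefficient of `X^i Y^(r-i)` in `(C a * X + Y)^r`. -/
lemma coeff_linear_pow' {R : Type*} [CommRing R] (a : R) (r i : ℕ) (hi : i ≤ r) :
    MvPolynomial.coeff (Finsupp.single 0 i + Finsupp.single 1 (r - i))
      ((C a * X 0 + X 1 : MvPolynomial (Fin 2) R) ^ r) = r.choose i * a ^ i := by
  classical
  rw [add_pow, MvPolynomial.coeff_sum]
  have hterm : ∀ k, (C a * X 0 : MvPolynomial (Fin 2) R) ^ k * X 1 ^ (r - k) * (r.choose k : MvPolynomial (Fin 2) R)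
      = monomial (Finsupp.single 0 k + Finsupp.single 1 (r - k)) ((r.choose k : R) * a ^ k) := by
    intro k
    rw [mul_pow, ← C_pow, X_pow_eq_monomial, X_pow_eq_monomial,
      ((map_natCast C _).symm : (r.choose k : MvPolynomial (Fin 2) R) = C (r.choose k : R)),
      C_apply, C_apply]
    simp only [monomial_mul, one_mul, mul_one, zero_add, add_zero]
    rw [mul_comm]
  have hkey : ∀ k ∈ Finset.range (r + 1), k ≠ i →
      MvPolynomial.coeff (Finsupp.single 0 i + Finsupp.single 1 (r - i))
        ((C a * X 0 : MvPolynomial (Fin 2) R) ^ k * X 1 ^ (r - k) * (r.choose k : MvPolynomial (Fin 2) R)) = 0 := by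
    intro k _ hki
    rw [hterm, coeff_monomial, if_neg]
    intro hcon
    apply hki
    have := DFunLike.congr_fun hcon 0
    simpa [Finsupp.single_apply] using this
  rw [Finset.sum_eq_single i _ (fun hni => absurd (Finset.mem_range.mpr (by omega)) hni)]
  · rw [hterm, coeff_monomial, if_pos rfl]
  · exact hkey

lemma geom_sum_Icc' {p : ℕ} [Fact p.Prime] (u : ZMod p) (hu : u ≠ 0) :
    ∑ j ∈ Finset.Icc 1 (p - 1), u ^ j = if u = 1 then (-1 : ZMod p) else 0 := by
  have hp2 := (Fact.out : p.Prime).two_le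
  split_ifs with h1
  · subst h1
    simp only [one_pow, Finset.sum_const, Nat.card_Icc, Nat.add_sub_cancel, nsmul_eq_mul,
      mul_one]
    rw [Nat.cast_sub (by omega : 1 ≤ p), ZMod.natCast_self, Nat.cast_one, zero_sub]
  · have hgeom : ∑ j ∈ Finset.range (p - 1), u ^ j = 0 := by
      have hh := geom_sum_mul u (p - 1)
      rw [ZMod.pow_card_sub_one_eq_one hu, sub_self] at hh
      exact (mul_eq_zero.mp hh).resolve_right (sub_ne_zero.mpr h1)
    have hIcc : Finset.Icc 1 (p - 1) = Finset.Ico 1 p := by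
      rw [← Finset.Ico_add_one_right_eq_Icc]
      congr 1
      omega
    rw [hIcc, Finset.sum_Ico_eq_sum_range]
    calc ∑ j ∈ Finset.range (p - 1), u ^ (1 + j)
        = u * ∑ j ∈ Finset.range (p - 1), u ^ j := by
          rw [Finset.mul_sum]
          exact Finset.sum_congr rfl (fun j _ => by rw [pow_add, pow_one])
      _ = 0 := by rw [hgeom, mul_zero]

/-- If the base-`p` digit sum of `r > 0` is at least `p`, then the `p+1` polynomials
`X^r`, `Y^r`, and `(kX+Y)^r` for `k ∈ F_p^*`, are linearly independent over `F_p`. -/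
theorem lin_indep_of_digit_sum_ge (p : ℕ) (hp : p.Prime) (r : ℕ) (hr : 0 < r)
    (hdig : p ≤ (Nat.digits p r).sum)
    (A B : ZMod p) (c : ℕ → ZMod p)
    (h : (C A * X 0 ^ r + C B * X 1 ^ r +
        ∑ k ∈ Finset.Icc 1 (p - 1),
          C (c k) * (C ((k : ZMod p)) * X 0 + X 1) ^ r :
        MvPolynomial (Fin 2) (ZMod p)) = 0) :
    A = 0 ∧ B = 0 ∧ ∀ k ∈ Finset.Icc 1 (p - 1), c k = 0 := by
  haveI : Fact p.Prime := ⟨hp⟩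
  classical
  have hp2 := hp.two_le
  have hcast : ∀ k ∈ Finset.Icc 1 (p - 1), ((k : ZMod p) ≠ 0) := by
    intro k hk
    rw [Finset.mem_Icc] at hk
    rw [Ne, ZMod.natCast_eq_zero_iff]
    intro hdvd
    have := Nat.le_of_dvd (by omega) hdvd
    omega
  -- Step 1: power-sum equations
  have hS : ∀ j ∈ Finset.Icc 1 (p - 1),
      ∑ k ∈ Finset.Icc 1 (p - 1), c k * (k : ZMod p) ^ j = 0 := by
    intro j hj
    rw [Finset.mem_Icc] at hj
    obtain ⟨i, hipos, hir, hmod, hndvd⟩ := exists_exponent' p r hp hdig j hj.1 hj.2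
    have h0 := congrArg
      (MvPolynomial.coeff (Finsupp.single 0 i + Finsupp.single 1 (r - i))) h
    have hne1 : ¬ (Finsupp.single (0 : Fin 2) r =
        Finsupp.single 0 i + Finsupp.single 1 (r - i)) := by
      intro hcon
      have := DFunLike.congr_fun hcon 1
      simp [Finsupp.single_apply] at this
      omega
    have hne2 : ¬ (Finsupp.single (1 : Fin 2) r =
        Finsupp.single 0 i + Finsupp.single 1 (r - i)) := by
      intro hcon
      have := DFunLike.congr_fun hcon 0
      simp [Finsupp.single_apply] at this
      omega
    rw [MvPolynomial.coeff_zero, MvPolynomial.coeff_add, MvPolynomial.coeff_add,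
      MvPolynomial.coeff_sum, coeff_C_mul, coeff_C_mul, coeff_X_pow, coeff_X_pow,
      if_neg hne1, if_neg hne2] at h0
    simp only [mul_zero, zero_add, add_zero] at h0
    have h0' : ∑ k ∈ Finset.Icc 1 (p - 1),
        (r.choose i : ZMod p) * (c k * (k : ZMod p) ^ j) = 0 := by
      rw [← h0]
      refine Finset.sum_congr rfl (fun k hk => ?_)
      rw [coeff_C_mul]
      have hcl := coeff_linear_pow' ((k : ZMod p)) r i (le_of_lt hir)
      rw [pow_eq_pow_of_modEq' (hcast k hk) hmod] at hcl
      calc (r.choose i : ZMod p) * (c k * (k : ZMod p) ^ j)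
          = c k * ((r.choose i : ZMod p) * (k : ZMod p) ^ j) := by ring
        _ = _ := (congrArg (fun z => c k * z) hcl).symm
    rw [← Finset.mul_sum] at h0'
    have hchoose : ((r.choose i : ℕ) : ZMod p) ≠ 0 := by
      rw [Ne, ZMod.natCast_eq_zero_iff]; exact hndvd
    exact (mul_eq_zero.mp h0').resolve_left hchoose
  -- Step 2: invert the character sums
  have hc : ∀ k' ∈ Finset.Icc 1 (p - 1), c k' = 0 := by
    intro k' hk'
    have hk'lt : k' ≤ p - 1 ∧ 1 ≤ k' := by
      rw [Finset.mem_Icc] at hk'; exact ⟨hk'.2, hk'.1⟩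
    have hT : ∑ j ∈ Finset.Icc 1 (p - 1),
        ((k' : ZMod p)⁻¹) ^ j * ∑ k ∈ Finset.Icc 1 (p - 1), c k * (k : ZMod p) ^ j = 0 :=
      Finset.sum_eq_zero (fun j hj => by rw [hS j hj, mul_zero])
    simp only [Finset.mul_sum] at hT
    rw [Finset.sum_comm] at hT
    have hinner : ∀ k ∈ Finset.Icc 1 (p - 1),
        ∑ j ∈ Finset.Icc 1 (p - 1), ((k' : ZMod p)⁻¹) ^ j * (c k * (k : ZMod p) ^ j)
        = c k * (if ((k' : ZMod p)⁻¹ * (k : ZMod p)) = 1 then (-1 : ZMod p) else 0) := by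
      intro k hk
      rw [← geom_sum_Icc' (((k' : ZMod p))⁻¹ * (k : ZMod p))
        (mul_ne_zero (inv_ne_zero (hcast k' hk')) (hcast k hk)), Finset.mul_sum]
      exact Finset.sum_congr rfl (fun j _ => by rw [mul_pow]; ring)
    rw [Finset.sum_congr rfl hinner] at hT
    rw [Finset.sum_eq_single k'] at hT
    · rw [if_pos (inv_mul_cancel₀ (hcast k' hk')), mul_neg_one, neg_eq_zero] at hT
      exact hT
    · intro k hk hkk'
      rw [if_neg, mul_zero]
      intro hcon
      rw [inv_mul_eq_one₀ (hcast k' hk')] at hcon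
      have hv := congrArg ZMod.val hcon
      rw [Finset.mem_Icc] at hk
      rw [ZMod.val_cast_of_lt (by omega), ZMod.val_cast_of_lt (by omega)] at hv
      exact hkk' (hv.symm)
    · intro hcon; exact absurd hk' hcon
  -- Step 3: conclude A = 0, B = 0
  have hsum0 : (∑ k ∈ Finset.Icc 1 (p - 1),
      C (c k) * (C ((k : ZMod p)) * X 0 + X 1) ^ r : MvPolynomial (Fin 2) (ZMod p)) = 0 :=
    Finset.sum_eq_zero (fun k hk => by rw [hc k hk, map_zero, zero_mul])
  rw [hsum0, add_zero] at h
  have hne3 : ¬ (Finsupp.single (1 : Fin 2) r = Finsupp.single (0 : Fin 2) r) := by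
    intro hcon
    have := DFunLike.congr_fun hcon 0
    simp [Finsupp.single_apply] at this
    omega
  have hne4 : ¬ (Finsupp.single (0 : Fin 2) r = Finsupp.single (1 : Fin 2) r) := by
    intro hcon; exact hne3 hcon.symm
  have hA := congrArg (MvPolynomial.coeff (Finsupp.single 0 r)) h
  rw [MvPolynomial.coeff_zero, MvPolynomial.coeff_add, coeff_C_mul, coeff_C_mul,
    coeff_X_pow, coeff_X_pow, if_pos rfl, if_neg hne3, mul_one, mul_zero, add_zero] at hA
  have hB := congrArg (MvPolynomial.coeff (Finsupp.single 1 r)) h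
  rw [MvPolynomial.coeff_zero, MvPolynomial.coeff_add, coeff_C_mul, coeff_C_mul,
    coeff_X_pow, coeff_X_pow, if_pos rfl, if_neg hne4, mul_one, mul_zero, zero_add] at hB
  exact ⟨hA, hB, hc⟩
end

section
/- Let p be a prime and r an integer with r ≥ p whose sum of base-p digits is less than p. Then the p+1 polynomials X^r, Y^r, and (kX+Y)^r for k in F_p^* are linearly dependent over F_p in the polynomial ring F_p[X,Y]. -/
open MvPolynomial

private lemma digitSum_pos {p n : ℕ} (hn : n ≠ 0) : 0 < (Nat.digits p n).sum := by
  rcases Nat.eq_zero_or_pos ((Nat.digits p n).sum) with h | h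
  · exfalso
    have hne : Nat.digits p n ≠ [] := Nat.digits_ne_nil_iff_ne_zero.mpr hn
    have hlast := Nat.getLast_digit_ne_zero p hn
    exact hlast (List.sum_eq_zero_iff.mp h _ (List.getLast_mem hne))
  · exact h

private lemma choose_cast_zero {p r j : ℕ} [hpf : Fact p.Prime]
    (hdig : (Nat.digits p r).sum < p) (hj0 : 0 < j) (hjr : j < r)
    (hdvd : (p - 1) ∣ j) : ((r.choose j : ℕ) : ZMod p) = 0 := by
  have hp : p.Prime := hpf.out
  have h2 := hp.two_le
  rw [ZMod.natCast_eq_zero_iff]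
  by_contra hnd
  have hv : padicValNat p (r.choose j) = 0 := padicValNat.eq_zero_of_not_dvd hnd
  have hk := sub_one_mul_padicValNat_choose_eq_sub_sum_digits (p := p) (le_of_lt hjr)
  rw [hv, mul_zero] at hk
  have hsj : (p - 1) ∣ (Nat.digits p j).sum := by
    rcases eq_or_lt_of_le h2 with h2' | h3
    · have : p - 1 = 1 := by omega
      rw [this]; exact one_dvd _
    · have hmod : p % (p - 1) = 1 := by
        have h := Nat.add_mod_left (p - 1) 1
        rw [show p - 1 + 1 = p by omega] at h
        rw [h, Nat.mod_eq_of_lt (by omega)]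
      have hme : j % (p - 1) = (Nat.digits p j).sum % (p - 1) :=
        Nat.modEq_digits_sum (p - 1) p hmod j
      have hj' : j % (p - 1) = 0 := Nat.eq_zero_of_dvd_of_lt hdvd |> fun _ => Nat.mod_eq_zero_of_dvd hdvd
      exact Nat.dvd_of_mod_eq_zero (by omega)
  have hsj' : p - 1 ≤ (Nat.digits p j).sum := Nat.le_of_dvd (digitSum_pos hj0.ne') hsj
  have hsrj : 0 < (Nat.digits p (r - j)).sum := digitSum_pos (by omega)
  omega

private lemma sum_pow_Icc (p : ℕ) [hpf : Fact p.Prime] (j : ℕ) :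
    ∑ k ∈ Finset.Icc 1 (p - 1), ((k : ZMod p)) ^ j
      = if (p - 1) ∣ j then -1 else 0 := by
  classical
  have hp : p.Prime := hpf.out
  have h2 := hp.two_le
  haveI : NeZero p := ⟨hp.ne_zero⟩
  have hs := FiniteField.sum_pow_units (ZMod p) j
  rw [ZMod.card] at hs
  rw [← hs]
  refine (Finset.sum_bij' (fun (x : (ZMod p)ˣ) (_ : x ∈ Finset.univ) => ((x : ZMod p)).val)
      (fun k hk => ZMod.unitOfCoprime k ?_) ?_ ?_ ?_ ?_ ?_).symm
  · -- coprimality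
    have hk1 : 1 ≤ k := (Finset.mem_Icc.mp hk).1
    have hk2 : k ≤ p - 1 := (Finset.mem_Icc.mp hk).2
    refine Nat.coprime_comm.mp (hp.coprime_iff_not_dvd.mpr fun hd => ?_)
    have := Nat.le_of_dvd (by omega) hd
    omega
  · intro x _
    have hx0 : (x : ZMod p) ≠ 0 := x.ne_zero
    have h1 : (x : ZMod p).val ≠ 0 := fun h => hx0 ((ZMod.val_eq_zero _).mp h)
    have h2' : (x : ZMod p).val < p := ZMod.val_lt _
    simp only [Finset.mem_Icc]
    omega
  · intro k hk; exact Finset.mem_univ _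
  · intro x _
    ext
    rw [ZMod.coe_unitOfCoprime, ZMod.natCast_zmod_val]
  · intro k hk
    have hk2 : k ≤ p - 1 := (Finset.mem_Icc.mp hk).2
    rw [ZMod.coe_unitOfCoprime, ZMod.val_natCast_of_lt (by omega)]
  · intro x _
    rw [ZMod.natCast_zmod_val]

/-- If `r ≥ p` and the base-`p` digit sum of `r` is less than `p`, then the `p+1`
polynomials `X^r`, `Y^r`, `(kX+Y)^r` for `k ∈ F_p^*` are linearly dependent over `F_p`. -/
theorem lin_dep_of_digit_sum_lt (p : ℕ) (hp : p.Prime) (r : ℕ) (hr : p ≤ r)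
    (hdig : (Nat.digits p r).sum < p) :
    ∃ (A B : ZMod p) (c : ℕ → ZMod p),
      (A ≠ 0 ∨ B ≠ 0 ∨ ∃ k ∈ Finset.Icc 1 (p - 1), c k ≠ 0) ∧
      (C A * X 0 ^ r + C B * X 1 ^ r +
        ∑ k ∈ Finset.Icc 1 (p - 1),
          C (c k) * (C ((k : ZMod p)) * X 0 + X 1) ^ r :
        MvPolynomial (Fin 2) (ZMod p)) = 0 := by
  haveI : Fact p.Prime := ⟨hp⟩
  classical
  have h2 := hp.two_le
  refine ⟨if (p - 1) ∣ r then 1 else 0, 1, fun _ => 1, Or.inr (Or.inl one_ne_zero), ?_⟩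
  have expand : ∀ k : ℕ,
      ((C ((k : ZMod p)) * X 0 + X 1) ^ r : MvPolynomial (Fin 2) (ZMod p))
        = ∑ j ∈ Finset.range (r + 1),
            C ((k : ZMod p) ^ j) *
              (X 0 ^ j * X 1 ^ (r - j) * C ((r.choose j : ZMod p))) := by
    intro k
    rw [add_pow]
    refine Finset.sum_congr rfl fun j hj => ?_
    rw [← map_natCast (C : ZMod p →+* MvPolynomial (Fin 2) (ZMod p)) (r.choose j),
      mul_pow, ← C_pow]
    ring
  simp only [map_one, one_mul, expand]
  rw [Finset.sum_comm]
  have hswap : ∀ j ∈ Finset.range (r + 1),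
      (∑ k ∈ Finset.Icc 1 (p - 1), C ((k : ZMod p) ^ j) *
          (X 0 ^ j * X 1 ^ (r - j) * C ((r.choose j : ZMod p)))
        : MvPolynomial (Fin 2) (ZMod p))
      = C (if (p - 1) ∣ j then (-1 : ZMod p) else 0) *
          (X 0 ^ j * X 1 ^ (r - j) * C ((r.choose j : ZMod p))) := by
    intro j _
    rw [← Finset.sum_mul, ← map_sum, sum_pow_Icc]
  rw [Finset.sum_congr rfl hswap]
  have hsplit :
      (∑ j ∈ Finset.range (r + 1),
        C (if (p - 1) ∣ j then (-1 : ZMod p) else 0) *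
          (X 0 ^ j * X 1 ^ (r - j) * C ((r.choose j : ZMod p)))
        : MvPolynomial (Fin 2) (ZMod p))
      = ∑ j ∈ ({0, r} : Finset ℕ),
        C (if (p - 1) ∣ j then (-1 : ZMod p) else 0) *
          (X 0 ^ j * X 1 ^ (r - j) * C ((r.choose j : ZMod p))) := by
    refine (Finset.sum_subset ?_ ?_).symm
    · intro j hj
      simp only [Finset.mem_insert, Finset.mem_singleton, Finset.mem_range] at hj ⊢
      omega
    · intro j hj hj'
      simp only [Finset.mem_insert, Finset.mem_singleton, not_or] at hj'
      rw [Finset.mem_range] at hj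
      have hj0 : 0 < j := Nat.pos_of_ne_zero hj'.1
      have hjr : j < r := lt_of_le_of_ne (by omega) hj'.2
      by_cases hd : (p - 1) ∣ j
      · rw [choose_cast_zero hdig hj0 hjr hd]
        simp
      · rw [if_neg hd]
        simp
  rw [hsplit, Finset.sum_pair (show (0 : ℕ) ≠ r by omega)]
  simp only [pow_zero, Nat.sub_zero, Nat.sub_self, Nat.choose_self, Nat.choose_zero_right,
    Nat.cast_one, map_one, mul_one, one_mul, if_pos (dvd_zero (p - 1))]
  by_cases hd : (p - 1) ∣ r
  · rw [if_pos hd, if_pos hd]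
    simp only [map_one, map_neg]
    ring
  · rw [if_neg hd, if_neg hd]
    simp only [map_zero, map_neg, map_one]
    ring
end

section
/- Let p > 3 be a prime and let r ≥ 3p+2 be an integer such that p does not divide r, p does not divide r-1, and the sum of the base-p digits of r-2 is at least p. Then the 3p+3 polynomials X^r, Y^r, X^{r-1}Y, X^2(jX+Y)^{r-2} for j in F_p, Y^2(X+kY)^{r-2} for k in F_p, and XY(lX+Y)^{r-2} for l in F_p, are linearly independent over F_p in F_p[X,Y]. -/
open MvPolynomial


namespace LinIndepAux

variable {p : ℕ}

lemma pow_red [Fact p.Prime] (b : ZMod p) {t t' : ℕ} (ht : 1 ≤ t) (ht' : 1 ≤ t')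
    (h : t % (p - 1) = t' % (p - 1)) : b ^ t = b ^ t' := by
  rcases eq_or_ne b 0 with rfl | hb
  · rw [zero_pow (by omega), zero_pow (by omega)]
  · have h1 : b ^ (p - 1) = 1 := ZMod.pow_card_sub_one_eq_one hb
    have e : ∀ s : ℕ, b ^ s = b ^ (s % (p - 1)) := by
      intro s
      conv_lhs => rw [← Nat.div_add_mod s (p - 1)]
      rw [pow_add, pow_mul, h1, one_pow, one_mul]
    rw [e t, e t', h]

lemma quad3 {F : Type*} [Field F] {a b c A B C : F} (hab : a ≠ b) (hac : a ≠ c) (hbc : b ≠ c)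
    (h1 : A * a ^ 2 + B * a + C = 0) (h2 : A * b ^ 2 + B * b + C = 0)
    (h3 : A * c ^ 2 + B * c + C = 0) : A = 0 ∧ B = 0 ∧ C = 0 := by
  have e12 : (a - b) * (A * (a + b) + B) = 0 := by linear_combination h1 - h2
  have e13 : (a - c) * (A * (a + c) + B) = 0 := by linear_combination h1 - h3
  have f12 : A * (a + b) + B = 0 := by
    rcases mul_eq_zero.mp e12 with h | h
    · exact absurd (sub_eq_zero.mp h) hab
    · exact h
  have f13 : A * (a + c) + B = 0 := by
    rcases mul_eq_zero.mp e13 with h | h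
    · exact absurd (sub_eq_zero.mp h) hac
    · exact h
  have hA : A * (b - c) = 0 := by linear_combination f12 - f13
  have hA0 : A = 0 := by
    rcases mul_eq_zero.mp hA with h | h
    · exact h
    · exact absurd (sub_eq_zero.mp h) hbc
  subst hA0
  have hB : B = 0 := by linear_combination f12
  subst hB
  refine ⟨rfl, rfl, by linear_combination h1⟩

lemma lucas_zmod [Fact p.Prime] (n k : ℕ) :
    (Nat.choose n k : ZMod p)
      = (Nat.choose (n % p) (k % p) : ZMod p) * (Nat.choose (n / p) (k / p) : ZMod p) := by
  have := @Choose.choose_modEq_choose_mod_mul_choose_div n k p _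
  have h2 := (ZMod.intCast_eq_intCast_iff _ _ _).mpr this
  push_cast at h2
  exact_mod_cast h2

lemma three_of_card {s : Finset ℕ} (h : 3 ≤ s.card) :
    ∃ a ∈ s, ∃ b ∈ s, ∃ c ∈ s, a ≠ b ∧ a ≠ c ∧ b ≠ c := by
  obtain ⟨a, ha⟩ := Finset.card_pos.mp (show 0 < s.card by omega)
  have h2 : 2 ≤ (s.erase a).card := by
    have := Finset.card_erase_of_mem ha; omega
  obtain ⟨b, hb⟩ := Finset.card_pos.mp (by omega : 0 < (s.erase a).card)
  have h3 : 1 ≤ ((s.erase a).erase b).card := by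
    have := Finset.card_erase_of_mem hb; omega
  obtain ⟨c, hc⟩ := Finset.card_pos.mp (by omega : 0 < ((s.erase a).erase b).card)
  have hbm := Finset.mem_of_mem_erase hb
  have hcm := Finset.mem_of_mem_erase (Finset.mem_of_mem_erase hc)
  refine ⟨a, ha, b, hbm, c, hcm, ?_, ?_, ?_⟩
  · exact fun h => (Finset.ne_of_mem_erase hb) h.symm
  · exact fun h => (Finset.ne_of_mem_erase (Finset.mem_of_mem_erase hc)) h.symm
  · exact fun h => (Finset.ne_of_mem_erase hc) h.symm

lemma mod_inj {q a b : ℕ} (hq : 0 < q) (h : a % q = b % q) (h2 : a ≤ b) (h3 : b < a + q) : a = b := by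
  have : q ∣ b - a := (Nat.modEq_iff_dvd' h2).mp h
  rcases this with ⟨k, hk⟩
  have hk0 : k = 0 := by
    by_contra h'
    have h1 : 1 ≤ k := by omega
    have : q * 1 ≤ q * k := Nat.mul_le_mul_left q h1
    omega
  subst hk0
  omega

lemma moments [hpf : Fact p.Prime] (g : ZMod p → ZMod p)
    (h : ∀ t, t ≤ p - 1 → ∑ b : ZMod p, g b * b ^ t = 0) : ∀ x, g x = 0 := by
  have hp2 : 2 ≤ p := hpf.out.two_le
  intro x
  have key : ∑ b : ZMod p, g b * (b - x) ^ (p - 1) = 0 := by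
    have expand : ∀ b : ZMod p,
        g b * (b - x) ^ (p - 1)
          = ∑ t ∈ Finset.range (p - 1 + 1), (g b * b ^ t) * ((-x) ^ (p - 1 - t) * ((p-1).choose t : ZMod p)) := by
      intro b
      rw [sub_eq_add_neg, add_pow, Finset.mul_sum]
      exact Finset.sum_congr rfl fun t _ => by ring
    rw [Finset.sum_congr rfl fun b _ => expand b, Finset.sum_comm]
    rw [Finset.sum_congr rfl
      (fun t ht => by rw [← Finset.sum_mul, h t (by have := Finset.mem_range.mp ht; omega), zero_mul])]
    simp
  have key2 : ∑ b : ZMod p, g b * (b - x) ^ (p - 1) = (∑ b : ZMod p, g b) - g x := by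
    have step : ∀ b : ZMod p, g b * (b - x) ^ (p - 1) = g b - (if b = x then g b else 0) := by
      intro b
      rcases eq_or_ne b x with rfl | hbx
      · simp [zero_pow (show p - 1 ≠ 0 by omega)]
      · rw [ZMod.pow_card_sub_one_eq_one (sub_ne_zero.mpr hbx), if_neg hbx, mul_one, sub_zero]
    rw [Finset.sum_congr rfl fun b _ => step b, Finset.sum_sub_distrib, Finset.sum_ite_eq' _ x g,
      if_pos (Finset.mem_univ x)]
  have h0 : ∑ b : ZMod p, g b = 0 := by simpa using h 0 (by omega)
  rw [key2, h0] at key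
  rw [zero_sub, neg_eq_zero] at key
  exact key

end LinIndepAux

namespace LinIndepAux2

variable {p : ℕ}

lemma cast_choose_ne_zero [Fact p.Prime] {a b : ℕ} (ha : a < p) (hb : b ≤ a) :
    (Nat.choose a b : ZMod p) ≠ 0 := by
  rw [Ne, ZMod.natCast_eq_zero_iff]
  intro hdvd
  have h1 : p ∣ a.factorial := by
    rw [← Nat.choose_mul_factorial_mul_factorial hb]
    exact Dvd.dvd.mul_right (Dvd.dvd.mul_right hdvd _) _
  have := (Nat.Prime.dvd_factorial (Fact.out : p.Prime)).mp h1
  omega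

lemma lucas_zmod' [Fact p.Prime] (n k : ℕ) :
    (Nat.choose n k : ZMod p)
      = (Nat.choose (n % p) (k % p) : ZMod p) * (Nat.choose (n / p) (k / p) : ZMod p) := by
  have := @Choose.choose_modEq_choose_mod_mul_choose_div n k p _
  have h2 := (ZMod.intCast_eq_intCast_iff _ _ _).mpr this
  push_cast at h2
  exact_mod_cast h2

lemma pick [hpf : Fact p.Prime] :
    ∀ N s, s ≤ (Nat.digits p N).sum →
      ∃ M, M ≤ N ∧ (s < (Nat.digits p N).sum → M < N) ∧ M % (p-1) = s % (p-1)
        ∧ (Nat.choose N M : ZMod p) ≠ 0 ∧ (M = 0 ↔ s = 0) := by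
  have hp2 : 2 ≤ p := hpf.out.two_le
  intro N
  induction N using Nat.strong_induction_on with
  | _ N ih =>
    intro s hs
    rcases Nat.eq_zero_or_pos N with rfl | hN
    · simp only [Nat.digits_zero, List.sum_nil, Nat.le_zero] at hs
      subst hs
      exact ⟨0, le_refl _, by simp, rfl, by simp, by simp⟩
    · have hdig : Nat.digits p N = (N % p) :: Nat.digits p (N / p) :=
        Nat.digits_def' (by omega) hN
      rw [hdig] at hs
      simp only [List.sum_cons] at hs
      set n0 := N % p with hn0
      set N' := N / p with hN'
      have hn0lt : n0 < p := Nat.mod_lt _ (by omega)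
      have hNeq : p * N' + n0 = N := by rw [hN', hn0]; exact Nat.div_add_mod N p
      by_cases hcase : s ≤ n0
      · refine ⟨s, by omega, ?_, rfl, ?_, Iff.rfl⟩
        · rw [hdig]
          simp only [List.sum_cons]
          intro hlt
          rcases Nat.eq_zero_or_pos N' with h0 | h1
          · have : (Nat.digits p N').sum = 0 := by rw [h0]; simp
            omega
          · have h2 : p * 1 ≤ p * N' := Nat.mul_le_mul_left p h1
            rw [mul_one] at h2
            omega
        · rw [lucas_zmod' N s, Nat.mod_eq_of_lt (by omega : s < p),
            Nat.div_eq_of_lt (by omega : s < p), ← hn0, ← hN', Nat.choose_zero_right,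
            Nat.cast_one, mul_one]
          exact cast_choose_ne_zero hn0lt hcase
      · have hN'lt : N' < N := Nat.div_lt_self hN (by omega)
        obtain ⟨M', hM'le, hM'lt, hM'mod, hM'ne, hM'zero⟩ :=
          ih N' hN'lt (s - n0) (by omega)
        refine ⟨n0 + p * M', ?_, ?_, ?_, ?_, ?_⟩
        · have h2 := Nat.mul_le_mul_left p hM'le; omega
        · rw [hdig]; simp only [List.sum_cons]
          intro hlt
          have hMlt : M' < N' := hM'lt (by omega)
          have h2 := Nat.mul_le_mul_left p (show M' + 1 ≤ N' by omega)
          rw [Nat.mul_add, mul_one] at h2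
          omega
        · have hpm : p % (p-1) = 1 % (p-1) := by
            have h := Nat.add_mod_left (p-1) 1
            rw [show (p-1) + 1 = p by omega] at h
            exact h
          have h1 : p * M' ≡ 1 * M' [MOD p - 1] := Nat.ModEq.mul_right M' hpm
          have h2 : p * M' ≡ s - n0 [MOD p - 1] := by
            rw [one_mul] at h1; exact h1.trans hM'mod
          have h3 : n0 + p * M' ≡ n0 + (s - n0) [MOD p - 1] := Nat.ModEq.add_left n0 h2
          have : n0 + (s - n0) = s := by omega
          rw [this] at h3
          exact h3
        · rw [lucas_zmod' N (n0 + p * M'), Nat.add_mul_mod_self_left,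
            Nat.add_mul_div_left _ _ (by omega : 0 < p), Nat.div_eq_of_lt hn0lt, zero_add,
            ← hn0, Nat.mod_eq_of_lt hn0lt, Nat.choose_self, Nat.cast_one, one_mul, ← hN']
          exact hM'ne
        · constructor
          · intro h0
            have hpM : p * M' = 0 := by omega
            have hM0 : M' = 0 := by
              rcases Nat.mul_eq_zero.mp hpM with h | h
              · omega
              · exact h
            have := hM'zero.mp hM0
            omega
          · intro h0; omega

end LinIndepAux2

namespace LinIndepAux3

variable {p : ℕ}

lemma cast_fact_ne_zero [Fact p.Prime] {a : ℕ} (ha : a < p) :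
    ((Nat.factorial a : ℕ) : ZMod p) ≠ 0 := by
  rw [Ne, ZMod.natCast_eq_zero_iff]
  intro hdvd
  have := (Nat.Prime.dvd_factorial (Fact.out : p.Prime)).mp hdvd
  omega

lemma cast_nat_inj [Fact p.Prime] {x y : ℕ} (hx : x < p) (hy : y < p)
    (h : (x : ZMod p) = y) : x = y := by
  have := congrArg ZMod.val h
  rwa [ZMod.val_cast_of_lt hx, ZMod.val_cast_of_lt hy] at this

lemma idA {m x : ℕ} (hx : x ≤ m + 2) :
    (m+2).choose x * (x.factorial * (m+2-x).factorial) = (m+2).factorial := by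
  rw [← Nat.choose_mul_factorial_mul_factorial hx, mul_assoc]

lemma idB {m x : ℕ} (hx : x ≤ m + 2) :
    (m+1).choose x * (x.factorial * (m+2-x).factorial) = (m+1).factorial * (m+2-x) := by
  rcases Nat.lt_or_ge x (m+2) with h | h
  · have hx1 : x ≤ m + 1 := by omega
    have hfac : (m+2-x).factorial = (m+2-x) * (m+1-x).factorial := by
      rw [show m+2-x = (m+1-x)+1 by omega, Nat.factorial_succ, show m+1-x+1 = m+2-x by omega]
    rw [hfac, ← Nat.choose_mul_factorial_mul_factorial hx1]
    ring
  · have hxe : x = m + 2 := by omega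
    subst hxe
    rw [Nat.choose_eq_zero_of_lt (by omega), Nat.sub_self]
    simp

lemma idC {m x : ℕ} (hx : x ≤ m + 2) :
    m.choose x * (x.factorial * (m+2-x).factorial) = m.factorial * ((m+2-x) * (m+1-x)) := by
  rcases Nat.lt_or_ge x (m+1) with h | h
  · have hx1 : x ≤ m := by omega
    have hfac : (m+2-x).factorial = (m+2-x) * ((m+1-x) * (m-x).factorial) := by
      rw [show m+2-x = (m+1-x)+1 by omega, Nat.factorial_succ, show m+1-x+1 = m+2-x by omega,
        show m+1-x = (m-x)+1 by omega, Nat.factorial_succ, show m-x+1 = m+1-x by omega]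
    rw [hfac, ← Nat.choose_mul_factorial_mul_factorial hx1]
    ring
  · rcases Nat.eq_or_lt_of_le h with h1 | h1
    · have hxe : x = m + 1 := h1.symm
      subst hxe
      rw [Nat.choose_eq_zero_of_lt (by omega)]
      simp [Nat.sub_self]
    · have hxe : x = m + 2 := by omega
      subst hxe
      rw [Nat.choose_eq_zero_of_lt (by omega), Nat.sub_self]
      simp

lemma subcast [Fact p.Prime] {m x : ℕ} (hx : x ≤ m + 2) :
    (((m+2-x) * (m+1-x) : ℕ) : ZMod p)
      = (((m:ZMod p)+2) - x) * (((m:ZMod p)+1) - x) := by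
  rcases Nat.lt_or_ge x (m+2) with h | h
  · have hx1 : x ≤ m + 1 := by omega
    push_cast [Nat.cast_sub hx, Nat.cast_sub hx1]
    ring
  · have hxe : x = m + 2 := by omega
    subst hxe
    rw [Nat.sub_self]
    push_cast
    ring

lemma rowStep [Fact p.Prime] {m : ℕ} (hm : m + 2 < p) {lam mu nu : ZMod p} {x : ℕ}
    (hx : x ≤ m + 2)
    (e : lam * ((m+2).choose x : ZMod p) + mu * ((m+1).choose x : ZMod p)
          + nu * (m.choose x : ZMod p) = 0) :
    (nu * m.factorial) * (x:ZMod p)^2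
      + (-(mu * (m+1).factorial) - nu * m.factorial * (((m:ZMod p)+2) + ((m:ZMod p)+1))) * (x:ZMod p)
      + (lam * (m+2).factorial + mu * ((m+1).factorial) * ((m:ZMod p)+2)
          + nu * m.factorial * (((m:ZMod p)+2) * ((m:ZMod p)+1))) = 0 := by
  have w := ((x.factorial * (m+2-x).factorial : ℕ) : ZMod p)
  have mult : lam * ((m+2).choose x : ZMod p) * ((x.factorial * (m+2-x).factorial : ℕ) : ZMod p)
      + mu * ((m+1).choose x : ZMod p) * ((x.factorial * (m+2-x).factorial : ℕ) : ZMod p)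
      + nu * (m.choose x : ZMod p) * ((x.factorial * (m+2-x).factorial : ℕ) : ZMod p) = 0 := by
    have := congrArg (· * ((x.factorial * (m+2-x).factorial : ℕ) : ZMod p)) e
    simpa [add_mul] using this
  rw [mul_assoc lam, mul_assoc mu, mul_assoc nu, ← Nat.cast_mul, ← Nat.cast_mul, ← Nat.cast_mul,
    idA hx, idB hx, idC hx] at mult
  rw [Nat.cast_mul ((m+1).factorial), Nat.cast_mul (m.factorial),
    Nat.cast_sub (by omega : x ≤ m + 2), subcast hx] at mult
  push_cast at mult ⊢
  linear_combination mult

lemma rowIndep [Fact p.Prime] {m x1 x2 x3 : ℕ} (hm : m + 2 < p)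
    (hx1 : x1 ≤ m+2) (hx2 : x2 ≤ m+2) (hx3 : x3 ≤ m+2)
    (h12 : x1 ≠ x2) (h13 : x1 ≠ x3) (h23 : x2 ≠ x3) {lam mu nu : ZMod p}
    (e1 : lam * ((m+2).choose x1 : ZMod p) + mu * ((m+1).choose x1 : ZMod p)
            + nu * (m.choose x1 : ZMod p) = 0)
    (e2 : lam * ((m+2).choose x2 : ZMod p) + mu * ((m+1).choose x2 : ZMod p)
            + nu * (m.choose x2 : ZMod p) = 0)
    (e3 : lam * ((m+2).choose x3 : ZMod p) + mu * ((m+1).choose x3 : ZMod p)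
            + nu * (m.choose x3 : ZMod p) = 0) :
    lam = 0 ∧ mu = 0 ∧ nu = 0 := by
  have q1 := rowStep hm hx1 e1
  have q2 := rowStep hm hx2 e2
  have q3 := rowStep hm hx3 e3
  have hab : (x1 : ZMod p) ≠ (x2 : ZMod p) := fun hc => h12 (cast_nat_inj (by omega) (by omega) hc)
  have hac : (x1 : ZMod p) ≠ (x3 : ZMod p) := fun hc => h13 (cast_nat_inj (by omega) (by omega) hc)
  have hbc : (x2 : ZMod p) ≠ (x3 : ZMod p) := fun hc => h23 (cast_nat_inj (by omega) (by omega) hc)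
  obtain ⟨hA, hB, hC⟩ := LinIndepAux.quad3 hab hac hbc q1 q2 q3
  have hfm : ((m.factorial : ℕ) : ZMod p) ≠ 0 := cast_fact_ne_zero (by omega)
  have hfm1 : (((m+1).factorial : ℕ) : ZMod p) ≠ 0 := cast_fact_ne_zero (by omega)
  have hfm2 : (((m+2).factorial : ℕ) : ZMod p) ≠ 0 := cast_fact_ne_zero (by omega)
  have hnu : nu = 0 := by
    rcases mul_eq_zero.mp hA with h | h
    · exact h
    · exact absurd h hfm
  subst hnu
  have hmu' : mu * (((m+1).factorial : ℕ) : ZMod p) = 0 := by linear_combination -hB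
  have hmu : mu = 0 := by
    rcases mul_eq_zero.mp hmu' with h | h
    · exact h
    · exact absurd h hfm1
  subst hmu
  have hlam' : lam * (((m+2).factorial : ℕ) : ZMod p) = 0 := by linear_combination hC
  have hlam : lam = 0 := by
    rcases mul_eq_zero.mp hlam' with h | h
    · exact h
    · exact absurd h hfm2
  exact ⟨hlam, rfl, rfl⟩

end LinIndepAux3

namespace LinIndepAux4

/-- A good pair for class `τ`: `x ≤ m+2`, `s ≤ S`, `(x+s) % (p-1) = τ`,
with endpoint conditions. -/
def Good (p m S τ x s : ℕ) : Prop :=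
  x ≤ m + 2 ∧ s ≤ S ∧ (x + s) % (p - 1) = τ ∧ (s = 0 → 3 ≤ x) ∧ (s = S → x + 1 ≤ m)

lemma Xdef {p τ : ℕ} (hp5 : 5 ≤ p) (hτ : τ < p - 1) {s : ℕ} (hs : s ≤ p - 1) :
    ((τ + (p-1) - s) % (p-1) + s) % (p - 1) = τ := by
  rw [Nat.mod_add_mod, show τ + (p-1) - s + s = τ + (p-1) by omega, Nat.add_mod_right,
    Nat.mod_eq_of_lt hτ]

lemma Xinj {p τ : ℕ} (hp5 : 5 ≤ p) {s s' : ℕ} (hs1 : 1 ≤ s) (hs : s ≤ p - 1)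
    (hs'1 : 1 ≤ s') (hs' : s' ≤ p - 1)
    (h : (τ + (p-1) - s) % (p-1) = (τ + (p-1) - s') % (p-1)) : s = s' := by
  rcases Nat.le_total s s' with hle | hle
  · have := LinIndepAux.mod_inj (show 0 < p - 1 by omega) h.symm (by omega) (by omega)
    omega
  · have := LinIndepAux.mod_inj (show 0 < p - 1 by omega) h (by omega) (by omega)
    omega

lemma Xlt {p τ s : ℕ} (hp5 : 5 ≤ p) : (τ + (p-1) - s) % (p-1) < p - 1 :=
  Nat.mod_lt _ (by omega)

lemma three_pairs {p : ℕ} (hp5 : 5 ≤ p) {m S τ : ℕ} (hm : m + 3 ≤ p) (hSm : p ≤ m + S)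
    (hτ : τ < p - 1) :
    ∃ x1 s1 x2 s2 x3 s3 : ℕ,
      Good p m S τ x1 s1 ∧ Good p m S τ x2 s2 ∧ Good p m S τ x3 s3 ∧
      x1 ≠ x2 ∧ x1 ≠ x3 ∧ x2 ≠ x3 := by
  by_cases hbig : (p-1) + 1 ≤ S
  · -- S ≥ p - 1 + 1 = p : choose x ∈ {0,1,2}
    have pick : ∀ x : ℕ, x ≤ m + 2 → ∃ s, Good p m S τ x s ∧ 1 ≤ s ∧ s ≤ (p-1) := by
      intro x hx
      set s0 := (τ + (p-1) - x) % (p-1) with hs0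
      have hs0lt : s0 < (p-1) := Nat.mod_lt _ (by omega)
      refine ⟨if s0 = 0 then (p-1) else s0, ⟨hx, by split <;> omega, ?_, by split <;> omega,
        by split <;> omega⟩, by split <;> omega, by split <;> omega⟩
      · split
        case isTrue h0 =>
          have : (x + s0) % (p-1) = τ := by
            rw [hs0, Nat.add_mod_mod, show x + (τ + (p-1) - x) = τ + (p-1) by omega,
              Nat.add_mod_right, Nat.mod_eq_of_lt hτ]
          rw [h0] at this
          rw [show x + (p-1) = x + 0 + (p-1) by omega, Nat.add_mod_right]
          simpa using this
        case isFalse h0 =>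
          rw [hs0, Nat.add_mod_mod, show x + (τ + (p-1) - x) = τ + (p-1) by omega,
            Nat.add_mod_right, Nat.mod_eq_of_lt hτ]
    obtain ⟨s1, g1, _, _⟩ := pick 0 (by omega)
    obtain ⟨s2, g2, _, _⟩ := pick 1 (by omega)
    obtain ⟨s3, g3, _, _⟩ := pick 2 (by omega)
    exact ⟨0, s1, 1, s2, 2, s3, g1, g2, g3, by omega, by omega, by omega⟩
  · have hSmq : S ≤ (p-1) := by omega
    have hS3 : 3 ≤ S := by omega
    by_cases hedge : m + 3 = p ∧ S = 3
    · obtain ⟨hmq, hS3⟩ := hedge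
      have hmq' : m + 2 = (p-1) := by omega
      have g1 : Good p m S τ ((τ + (p-1) - 1) % (p-1)) 1 :=
        ⟨by have := Xlt (τ := τ) (s := 1) hp5; omega, by omega,
          Xdef hp5 hτ (by omega), by omega, by omega⟩
      have g2 : Good p m S τ ((τ + (p-1) - 2) % (p-1)) 2 :=
        ⟨by have := Xlt (τ := τ) (s := 2) hp5; omega, by omega,
          Xdef hp5 hτ (by omega), by omega, by omega⟩
      have h12 : (τ + (p-1) - 1) % (p-1) ≠ (τ + (p-1) - 2) % (p-1) := by
        intro hc
        have := Xinj hp5 (by omega) (by omega) (by omega) (by omega) hc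
        omega
      by_cases hτ3 : 3 ≤ τ
      · -- third pair (τ, 0)
        have hx1 : (τ + (p-1) - 1) % (p-1) = τ - 1 := by
          rw [show τ + (p-1) - 1 = (p-1) + (τ - 1) by omega, Nat.add_mod_left,
            Nat.mod_eq_of_lt (by omega)]
        have hx2 : (τ + (p-1) - 2) % (p-1) = τ - 2 := by
          rw [show τ + (p-1) - 2 = (p-1) + (τ - 2) by omega, Nat.add_mod_left,
            Nat.mod_eq_of_lt (by omega)]
        have g3 : Good p m S τ τ 0 :=
          ⟨by omega, by omega, by rw [Nat.add_zero, Nat.mod_eq_of_lt hτ], fun _ => hτ3,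
            by omega⟩
        exact ⟨_, _, _, _, τ, 0, g1, g2, g3, h12, by omega, by omega⟩
      · -- third pair ((p-1), τ)
        have g3 : Good p m S τ (p-1) τ :=
          ⟨by omega, by omega, by rw [Nat.add_comm, Nat.add_mod_right, Nat.mod_eq_of_lt hτ],
            fun _ => by omega, by omega⟩
        refine ⟨_, _, _, _, (p-1), τ, g1, g2, g3, h12, ?_, ?_⟩
        · have := Xlt (τ := τ) (s := 1) (p := p) hp5; omega
        · have := Xlt (τ := τ) (s := 2) (p := p) hp5; omega
    · -- main counting case
      -- the set of good s values in [1, S-1]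
      set G := (Finset.Icc 1 (S - 1)).filter (fun s => (τ + (p-1) - s) % (p-1) ≤ m + 2) with hG
      have hGcard : 3 ≤ G.card := by
        rcases Nat.lt_or_ge (m+3) p with hlt | hge
        · -- m + 3 < p: counting argument
          set Bad := (Finset.Icc 1 (S - 1)).filter (fun s => ¬ (τ + (p-1) - s) % (p-1) ≤ m + 2)
            with hBad
          have hsplit : G.card + Bad.card = S - 1 := by
            rw [hG, hBad, Finset.card_filter_add_card_filter_not, Nat.card_Icc]
            omega
          have hmapmem : ∀ a ∈ Bad, (τ + (p-1) - a) % (p-1) ∈ Finset.Icc (m+3) ((p-1)-1) := by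
            intro a ha
            simp only [hBad, Finset.mem_filter, Finset.mem_Icc] at ha
            have := Xlt (τ := τ) (s := a) (p := p) hp5
            simp only [Finset.mem_Icc]
            omega
          have hmapinj : Set.InjOn (fun s => (τ + (p-1) - s) % (p-1)) Bad := by
            intro a ha b hb hab
            simp only [hBad, Finset.coe_filter, Set.mem_setOf_eq, Finset.mem_Icc] at ha hb
            exact Xinj hp5 (by omega) (by omega) (by omega) (by omega) hab
          have hBadcard : Bad.card ≤ (p-1) - 1 + 1 - (m + 3) := by
            have hcc := Finset.card_le_card_of_injOn _ hmapmem hmapinj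
            rw [Nat.card_Icc] at hcc
            exact hcc
          omega
        · -- m + 3 = p and S ≥ 4: every residue works
          have hmp : m + 3 = p := by omega
          have hS4 : 4 ≤ S := by
            rcases Nat.eq_or_lt_of_le hS3 with h | h
            · exact absurd ⟨hmp, h.symm⟩ hedge
            · omega
          have hsub : ∀ s ∈ Finset.Icc 1 3, s ∈ G := by
            intro s hs
            simp only [Finset.mem_Icc] at hs
            simp only [hG, Finset.mem_filter, Finset.mem_Icc]
            have hx := Xlt (τ := τ) (s := s) (p := p) hp5
            omega
          have : (Finset.Icc 1 3).card ≤ G.card := by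
            apply Finset.card_le_card
            intro s hs; exact hsub s hs
          rw [Nat.card_Icc] at this
          omega
      obtain ⟨a, ha, b, hb, c, hc, hab, hac, hbc⟩ := LinIndepAux.three_of_card hGcard
      simp only [hG, Finset.mem_filter, Finset.mem_Icc] at ha hb hc
      have mk : ∀ s, 1 ≤ s → s ≤ S - 1 → (τ + (p-1) - s) % (p-1) ≤ m + 2 →
          Good p m S τ ((τ + (p-1) - s) % (p-1)) s := by
        intro s h1 h2 h3
        exact ⟨h3, by omega, Xdef hp5 hτ (by omega), by omega, by omega⟩
      refine ⟨_, _, _, _, _, _, mk a ha.1.1 ha.1.2 ha.2, mk b hb.1.1 hb.1.2 hb.2,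
        mk c hc.1.1 hc.1.2 hc.2, ?_, ?_, ?_⟩
      · intro hcon; exact hab (Xinj hp5 (by omega) (by omega) (by omega) (by omega) hcon)
      · intro hcon; exact hac (Xinj hp5 (by omega) (by omega) (by omega) (by omega) hcon)
      · intro hcon; exact hbc (Xinj hp5 (by omega) (by omega) (by omega) (by omega) hcon)

end LinIndepAux4

namespace LinIndepAux5
open LinIndepAux LinIndepAux2 LinIndepAux3 LinIndepAux4

variable {p : ℕ}

lemma EQ_of_poly [Fact p.Prime] (n : ℕ) (al be ga : ZMod p → ZMod p) (d0 f0 B : ZMod p)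
    (h : (∑ b : ZMod p, (Polynomial.C (al b) * (Polynomial.X + Polynomial.C b) ^ (n+2)
          + Polynomial.C (be b) * (Polynomial.X + Polynomial.C b) ^ (n+1)
          + Polynomial.C (ga b) * (Polynomial.X + Polynomial.C b) ^ n))
        + Polynomial.C d0 * Polynomial.X ^ 2 + Polynomial.C f0 * Polynomial.X ^ 1
        + Polynomial.C B = 0) (i : ℕ) :
    ((n+2).choose i : ZMod p) * (∑ b : ZMod p, al b * b ^ (n+2-i))
    + ((n+1).choose i : ZMod p) * (∑ b : ZMod p, be b * b ^ (n+1-i))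
    + (n.choose i : ZMod p) * (∑ b : ZMod p, ga b * b ^ (n-i))
    + (if i = 2 then d0 else 0) + (if i = 1 then f0 else 0) + (if i = 0 then B else 0) = 0 := by
  have hc := congrArg (fun P => Polynomial.coeff P i) h
  simp only [Polynomial.coeff_add, Polynomial.finset_sum_coeff, Polynomial.coeff_C_mul,
    Polynomial.coeff_X_add_C_pow, Polynomial.coeff_X_pow, Polynomial.coeff_C,
    Polynomial.coeff_zero, mul_ite, mul_one, mul_zero] at hc
  have key : (∑ b : ZMod p, (al b * (b ^ (n+2-i) * (((n+2).choose i : ℕ) : ZMod p))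
        + be b * (b ^ (n+1-i) * (((n+1).choose i : ℕ) : ZMod p))
        + ga b * (b ^ (n-i) * ((n.choose i : ℕ) : ZMod p))))
      = ((n+2).choose i : ZMod p) * (∑ b : ZMod p, al b * b ^ (n+2-i))
        + ((n+1).choose i : ZMod p) * (∑ b : ZMod p, be b * b ^ (n+1-i))
        + (n.choose i : ZMod p) * (∑ b : ZMod p, ga b * b ^ (n-i)) := by
    rw [Finset.mul_sum, Finset.mul_sum, Finset.mul_sum, ← Finset.sum_add_distrib,
      ← Finset.sum_add_distrib]
    exact Finset.sum_congr rfl fun b _ => by ring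
  rw [← key]
  exact hc

theorem aux [hpf : Fact p.Prime] (hp3 : 3 < p) (n : ℕ) (hn : 3 * p ≤ n)
    (hn0 : n % p + 3 ≤ p) (hdig : p ≤ n % p + (Nat.digits p (n / p)).sum)
    (al be ga : ZMod p → ZMod p) (d0 f0 B : ZMod p)
    (h : (∑ b : ZMod p, (Polynomial.C (al b) * (Polynomial.X + Polynomial.C b) ^ (n+2)
          + Polynomial.C (be b) * (Polynomial.X + Polynomial.C b) ^ (n+1)
          + Polynomial.C (ga b) * (Polynomial.X + Polynomial.C b) ^ n))
        + Polynomial.C d0 * Polynomial.X ^ 2 + Polynomial.C f0 * Polynomial.X ^ 1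
        + Polynomial.C B = 0) :
    (∀ b, al b = 0) ∧ (∀ b, be b = 0) ∧ (∀ b, ga b = 0) ∧ d0 = 0 ∧ f0 = 0 ∧ B = 0 := by
  have hne4 : p ≠ 4 := by intro hc; rw [hc] at hpf; exact absurd hpf.out (by norm_num)
  have hp5 : 5 ≤ p := by
    have := hpf.out.two_le
    omega
  have EQ := fun i => EQ_of_poly n al be ga d0 f0 B h i
  set m := n % p with hm
  set N' := n / p with hN'
  have hNeq : p * N' + m = n := by rw [hN', hm]; exact Nat.div_add_mod n p
  have hm3 : m + 3 ≤ p := hn0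
  have hN'3 : 3 ≤ N' := by
    rw [hN', Nat.le_div_iff_mul_le (show 0 < p by omega)]; omega
  set S := (Nat.digits p N').sum with hS
  have hSm : p ≤ m + S := hdig
  have hpmod : Nat.ModEq (p-1) p 1 := by
    show p % (p-1) = 1 % (p-1)
    have h := Nat.add_mod_left (p-1) 1
    rw [show (p-1) + 1 = p by omega] at h
    exact h
  have sum_red : ∀ (g : ZMod p → ZMod p) (t t' : ℕ), 1 ≤ t → 1 ≤ t' →
      t % (p-1) = t' % (p-1) →
      (∑ b : ZMod p, g b * b ^ t) = ∑ b : ZMod p, g b * b ^ t' :=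
    fun g t t' h1 h2 h3 => Finset.sum_congr rfl fun b _ => by rw [pow_red b h1 h2 h3]
  have class3 : ∀ c, c < p - 1 →
      (∑ b : ZMod p, al b * b ^ (c+p+1)) = 0 ∧ (∑ b : ZMod p, be b * b ^ (c+p)) = 0 ∧
      (∑ b : ZMod p, ga b * b ^ (c+p-1)) = 0 := by
    intro c hc
    set τ := (n % (p-1) + (p-1) - c) % (p-1) with hτ
    have hτlt : τ < p - 1 := Nat.mod_lt _ (by omega)
    have hτc : (τ + c) % (p-1) = n % (p-1) := by
      rw [hτ, Nat.mod_add_mod, show n % (p-1) + (p-1) - c + c = n % (p-1) + (p-1) by omega,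
        Nat.add_mod_right, Nat.mod_mod_of_dvd n dvd_rfl]
    have mkeq : ∀ x s, Good p m S τ x s →
        (∑ b : ZMod p, al b * b ^ (c+p+1)) * (((m+2).choose x : ℕ) : ZMod p)
        + (∑ b : ZMod p, be b * b ^ (c+p)) * (((m+1).choose x : ℕ) : ZMod p)
        + (∑ b : ZMod p, ga b * b ^ (c+p-1)) * ((m.choose x : ℕ) : ZMod p) = 0 := by
      intro x s hg
      obtain ⟨hx, hsS, hmod, hs0, hsSe⟩ := hg
      obtain ⟨M, hMle, hMlt, hMmod, hMne, hMzero⟩ := pick N' s (by rw [← hS]; exact hsS)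
      set i := x + p * M with hi
      have hi3 : 3 ≤ i := by
        rcases Nat.eq_zero_or_pos M with h0 | h0
        · have hs00 := hMzero.mp h0
          have hx3 := hs0 hs00
          have : p * M = 0 := by rw [h0, mul_zero]
          omega
        · have h1 : p ≤ p * M := Nat.le_mul_of_pos_right p h0
          omega
      have hin : i + 1 ≤ n := by
        rcases Nat.eq_or_lt_of_le hsS with hse | hslt
        · have hxm := hsSe hse
          have h1 := Nat.mul_le_mul_left p hMle
          omega
        · have hMN : M < N' := hMlt (by rw [← hS]; omega)
          have h1 := Nat.mul_le_mul_left p (show M + 1 ≤ N' by omega)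
          rw [Nat.mul_add, mul_one] at h1
          omega
      have himod : i % (p-1) = τ := by
        have h2 : Nat.ModEq (p-1) i (x + s) := by
          have ha : Nat.ModEq (p-1) (p * M) (1 * M) := Nat.ModEq.mul_right M hpmod
          rw [one_mul] at ha
          have hb : Nat.ModEq (p-1) (p * M) s := ha.trans hMmod
          exact Nat.ModEq.add_left x hb
        rw [show i % (p-1) = (x+s) % (p-1) from h2, hmod]
      have hui : Nat.ModEq (p-1) (n - i) c := by
        have e2 : (i + c) % (p-1) = (τ + c) % (p-1) := by
          rw [Nat.add_mod i c, himod, Nat.mod_eq_of_lt hc]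
        have e1 : Nat.ModEq (p-1) (i + (n - i)) (i + c) := by
          show (i + (n-i)) % (p-1) = (i + c) % (p-1)
          rw [show i + (n - i) = n by omega, e2, hτc]
        exact Nat.ModEq.add_left_cancel' i e1
      have hrw1 : n + 2 - i = (n - i) + 2 := by omega
      have hrw2 : n + 1 - i = (n - i) + 1 := by omega
      have redS : (∑ b : ZMod p, al b * b ^ ((n-i)+2)) = ∑ b : ZMod p, al b * b ^ (c+p+1) := by
        apply sum_red al _ _ (by omega) (by omega)
        calc ((n-i)+2) % (p-1) = (c+2) % (p-1) := Nat.ModEq.add_right 2 hui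
          _ = ((c+2)+(p-1)) % (p-1) := (Nat.add_mod_right _ _).symm
          _ = (c+p+1) % (p-1) := by rw [show (c+2)+(p-1) = c+p+1 by omega]
      have redT : (∑ b : ZMod p, be b * b ^ ((n-i)+1)) = ∑ b : ZMod p, be b * b ^ (c+p) := by
        apply sum_red be _ _ (by omega) (by omega)
        calc ((n-i)+1) % (p-1) = (c+1) % (p-1) := Nat.ModEq.add_right 1 hui
          _ = ((c+1)+(p-1)) % (p-1) := (Nat.add_mod_right _ _).symm
          _ = (c+p) % (p-1) := by rw [show (c+1)+(p-1) = c+p by omega]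
      have redU : (∑ b : ZMod p, ga b * b ^ (n-i)) = ∑ b : ZMod p, ga b * b ^ (c+p-1) := by
        apply sum_red ga _ _ (by omega) (by omega)
        calc (n-i) % (p-1) = c % (p-1) := hui
          _ = (c+(p-1)) % (p-1) := (Nat.add_mod_right _ _).symm
          _ = (c+p-1) % (p-1) := by rw [show c+(p-1) = c+p-1 by omega]
      have hxp : x < p := by omega
      have hidiv : i % p = x := by
        rw [hi, Nat.add_mul_mod_self_left, Nat.mod_eq_of_lt hxp]
      have hidiv2 : i / p = M := by
        rw [hi, Nat.add_mul_div_left _ _ (show 0 < p by omega), Nat.div_eq_of_lt hxp, zero_add]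
      have lucA : (((n+2).choose i : ℕ) : ZMod p)
          = (((m+2).choose x : ℕ) : ZMod p) * ((N'.choose M : ℕ) : ZMod p) := by
        rw [lucas_zmod' (n+2) i, hidiv, hidiv2, show n + 2 = m+2 + p * N' by omega,
          Nat.add_mul_mod_self_left, Nat.add_mul_div_left _ _ (show 0 < p by omega),
          Nat.mod_eq_of_lt (show m+2 < p by omega),
          Nat.div_eq_of_lt (show m+2 < p by omega), zero_add]
      have lucB : (((n+1).choose i : ℕ) : ZMod p)
          = (((m+1).choose x : ℕ) : ZMod p) * ((N'.choose M : ℕ) : ZMod p) := by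
        rw [lucas_zmod' (n+1) i, hidiv, hidiv2, show n + 1 = m+1 + p * N' by omega,
          Nat.add_mul_mod_self_left, Nat.add_mul_div_left _ _ (show 0 < p by omega),
          Nat.mod_eq_of_lt (show m+1 < p by omega),
          Nat.div_eq_of_lt (show m+1 < p by omega), zero_add]
      have lucC : ((n.choose i : ℕ) : ZMod p)
          = ((m.choose x : ℕ) : ZMod p) * ((N'.choose M : ℕ) : ZMod p) := by
        rw [lucas_zmod' n i, hidiv, hidiv2]
      have eqi := EQ i
      rw [if_neg (by omega), if_neg (by omega), if_neg (by omega)] at eqi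
      rw [hrw1, hrw2, redS, redT, redU, lucA, lucB, lucC] at eqi
      have factored : ((N'.choose M : ℕ) : ZMod p) *
          ((∑ b : ZMod p, al b * b ^ (c+p+1)) * (((m+2).choose x : ℕ) : ZMod p)
          + (∑ b : ZMod p, be b * b ^ (c+p)) * (((m+1).choose x : ℕ) : ZMod p)
          + (∑ b : ZMod p, ga b * b ^ (c+p-1)) * ((m.choose x : ℕ) : ZMod p)) = 0 := by
        linear_combination eqi
      rcases mul_eq_zero.mp factored with hzero | hgood
      · exact absurd hzero hMne
      · exact hgood
    obtain ⟨x1,s1,x2,s2,x3,s3,g1,g2,g3,h12,h13,h23⟩ :=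
      three_pairs hp5 (show m+3 ≤ p by omega) hSm hτlt
    exact rowIndep (show m+2 < p by omega) g1.1 g2.1 g3.1 h12 h13 h23
      (mkeq _ _ g1) (mkeq _ _ g2) (mkeq _ _ g3)
  have shift_mod : ∀ t k : ℕ, k ≤ p - 1 →
      t % (p-1) = (((t + (p-1) - k) % (p-1)) + k) % (p-1) := by
    intro t k hk
    rw [Nat.mod_add_mod, show t + (p-1) - k + k = t + (p-1) by omega, Nat.add_mod_right]
  have hSt : ∀ t, 1 ≤ t → (∑ b : ZMod p, al b * b ^ t) = 0 := by
    intro t ht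
    have hc : (t + (p-1) - 2) % (p-1) < p - 1 := Nat.mod_lt _ (by omega)
    have hz := (class3 _ hc).1
    have hmodeq : t % (p-1) = (((t + (p-1) - 2) % (p-1)) + p + 1) % (p-1) := by
      calc t % (p-1) = (((t + (p-1) - 2) % (p-1)) + 2) % (p-1) := shift_mod t 2 (by omega)
        _ = ((((t + (p-1) - 2) % (p-1)) + 2) + (p-1)) % (p-1) := (Nat.add_mod_right _ _).symm
        _ = (((t + (p-1) - 2) % (p-1)) + p + 1) % (p-1) := by
            rw [show (((t + (p-1) - 2) % (p-1)) + 2) + (p-1) = ((t + (p-1) - 2) % (p-1)) + p + 1 by omega]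
    rw [sum_red al t _ ht (by omega) hmodeq]
    exact hz
  have hTt : ∀ t, 1 ≤ t → (∑ b : ZMod p, be b * b ^ t) = 0 := by
    intro t ht
    have hc : (t + (p-1) - 1) % (p-1) < p - 1 := Nat.mod_lt _ (by omega)
    have hz := (class3 _ hc).2.1
    have hmodeq : t % (p-1) = (((t + (p-1) - 1) % (p-1)) + p) % (p-1) := by
      calc t % (p-1) = (((t + (p-1) - 1) % (p-1)) + 1) % (p-1) := shift_mod t 1 (by omega)
        _ = ((((t + (p-1) - 1) % (p-1)) + 1) + (p-1)) % (p-1) := (Nat.add_mod_right _ _).symm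
        _ = (((t + (p-1) - 1) % (p-1)) + p) % (p-1) := by
            rw [show (((t + (p-1) - 1) % (p-1)) + 1) + (p-1) = ((t + (p-1) - 1) % (p-1)) + p by omega]
    rw [sum_red be t _ ht (by omega) hmodeq]
    exact hz
  have hUt : ∀ t, 1 ≤ t → (∑ b : ZMod p, ga b * b ^ t) = 0 := by
    intro t ht
    have hc : t % (p-1) < p - 1 := Nat.mod_lt _ (by omega)
    have hz := (class3 _ hc).2.2
    have hmodeq : t % (p-1) = ((t % (p-1)) + p - 1) % (p-1) := by
      have h1 : ((t % (p-1)) + (p-1)) % (p-1) = (t % (p-1)) % (p-1) := Nat.add_mod_right _ _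
      rw [Nat.mod_mod_of_dvd t dvd_rfl] at h1
      rw [show (t % (p-1)) + p - 1 = (t % (p-1)) + (p-1) by omega, h1]
    rw [sum_red ga t _ ht (by omega) hmodeq]
    exact hz
  have hS0 : (∑ b : ZMod p, al b * b ^ 0) = 0 := by
    have eqi := EQ (n+2)
    rw [if_neg (by omega), if_neg (by omega), if_neg (by omega), Nat.choose_self,
      Nat.choose_eq_zero_of_lt (show n+1 < n+2 by omega),
      Nat.choose_eq_zero_of_lt (show n < n+2 by omega), Nat.sub_self] at eqi
    simpa using eqi
  have hT0 : (∑ b : ZMod p, be b * b ^ 0) = 0 := by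
    have eqi := EQ (n+1)
    rw [if_neg (by omega), if_neg (by omega), if_neg (by omega), Nat.choose_self,
      Nat.choose_eq_zero_of_lt (show n < n+1 by omega),
      show n+2-(n+1) = 1 by omega, show n+1-(n+1) = 0 by omega, hSt 1 (by omega)] at eqi
    simpa using eqi
  have hU0 : (∑ b : ZMod p, ga b * b ^ 0) = 0 := by
    have eqi := EQ n
    rw [if_neg (by omega), if_neg (by omega), if_neg (by omega), Nat.choose_self,
      show n+2-n = 2 by omega, show n+1-n = 1 by omega, Nat.sub_self,
      hSt 2 (by omega), hTt 1 (by omega)] at eqi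
    simpa using eqi
  have hal : ∀ b, al b = 0 := moments al (fun t _ => by
    rcases Nat.eq_zero_or_pos t with rfl | hpos
    · exact hS0
    · exact hSt t hpos)
  have hbe : ∀ b, be b = 0 := moments be (fun t _ => by
    rcases Nat.eq_zero_or_pos t with rfl | hpos
    · exact hT0
    · exact hTt t hpos)
  have hga : ∀ b, ga b = 0 := moments ga (fun t _ => by
    rcases Nat.eq_zero_or_pos t with rfl | hpos
    · exact hU0
    · exact hUt t hpos)
  have hSz : ∀ (g : ZMod p → ZMod p), (∀ b, g b = 0) → ∀ t : ℕ,
      (∑ b : ZMod p, g b * b ^ t) = 0 := fun g hg t => by simp [hg]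
  have hd0 : d0 = 0 := by
    have eqi := EQ 2
    rw [if_pos rfl, if_neg (by omega), if_neg (by omega),
      hSz al hal, hSz be hbe, hSz ga hga] at eqi
    simpa using eqi
  have hf0 : f0 = 0 := by
    have eqi := EQ 1
    rw [if_neg (by omega), if_pos rfl, if_neg (by omega),
      hSz al hal, hSz be hbe, hSz ga hga] at eqi
    simpa using eqi
  have hB0 : B = 0 := by
    have eqi := EQ 0
    rw [if_neg (by omega), if_neg (by omega), if_pos rfl,
      hSz al hal, hSz be hbe, hSz ga hga] at eqi
    simpa using eqi
  exact ⟨hal, hbe, hga, hd0, hf0, hB0⟩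

end LinIndepAux5


namespace LinIndepAux6
open LinIndepAux LinIndepAux2 LinIndepAux3 LinIndepAux4 LinIndepAux5

variable {p : ℕ}

lemma sum_range_to_univ [NeZero p] {M : Type*} [AddCommMonoid M]
    (g : ZMod p → M) (fj : ℕ → M) (hfg : ∀ j, j < p → fj j = g ((j : ℕ) : ZMod p)) :
    ∑ j ∈ Finset.range p, fj j = ∑ b : ZMod p, g b := by
  refine Finset.sum_bij' (fun j _ => ((j : ℕ) : ZMod p)) (fun z _ => z.val) ?_ ?_ ?_ ?_ ?_
  · intro a _; exact Finset.mem_univ _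
  · intro a _; exact Finset.mem_range.mpr (ZMod.val_lt a)
  · intro a ha; exact ZMod.val_cast_of_lt (Finset.mem_range.mp ha)
  · intro a _; exact ZMod.natCast_zmod_val a
  · intro a ha; exact hfg a (Finset.mem_range.mp ha)

lemma sum_erase_inv [Fact p.Prime] {M : Type*} [AddCommMonoid M] (g : ZMod p → M) :
    ∑ b ∈ Finset.univ.erase (0 : ZMod p), g b
      = ∑ b ∈ Finset.univ.erase (0 : ZMod p), g b⁻¹ := by
  refine Finset.sum_bij' (fun b _ => b⁻¹) (fun b _ => b⁻¹) ?_ ?_ ?_ ?_ ?_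
  · intro a ha
    exact Finset.mem_erase.mpr ⟨inv_ne_zero (Finset.ne_of_mem_erase ha), Finset.mem_univ _⟩
  · intro a ha
    exact Finset.mem_erase.mpr ⟨inv_ne_zero (Finset.ne_of_mem_erase ha), Finset.mem_univ _⟩
  · intro a _; exact inv_inv a
  · intro a _; exact inv_inv a
  · intro a _; rw [inv_inv]

end LinIndepAux6

/-- For a prime `p > 3` and `r ≥ 3p+2` with `p ∤ r`, `p ∤ r-1` and base-`p` digit sum of
`r-2` at least `p`, the `3p+3` polynomials `X^r`, `Y^r`, `X^{r-1}Y`, `X²(jX+Y)^{r-2}`,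
`Y²(X+kY)^{r-2}`, `XY(lX+Y)^{r-2}` (with `j,k,l ∈ F_p`) are linearly independent. -/
theorem lin_indep_full_dim (p : ℕ) (hp : p.Prime) (hp3 : 3 < p) (r : ℕ)
    (hr : 3 * p + 2 ≤ r) (hr0 : ¬ p ∣ r) (hr1 : ¬ p ∣ (r - 1))
    (hdig : p ≤ (Nat.digits p (r - 2)).sum)
    (A B D : ZMod p) (d e f : ℕ → ZMod p)
    (h : (C A * X 0 ^ r + C B * X 1 ^ r + C D * X 0 ^ (r - 1) * X 1 +
        (∑ j ∈ Finset.range p,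
          C (d j) * X 0 ^ 2 * (C ((j : ZMod p)) * X 0 + X 1) ^ (r - 2)) +
        (∑ k ∈ Finset.range p,
          C (e k) * X 1 ^ 2 * (X 0 + C ((k : ZMod p)) * X 1) ^ (r - 2)) +
        (∑ l ∈ Finset.range p,
          C (f l) * (X 0 * X 1) * (C ((l : ZMod p)) * X 0 + X 1) ^ (r - 2)) :
        MvPolynomial (Fin 2) (ZMod p)) = 0) :
    A = 0 ∧ B = 0 ∧ D = 0 ∧
      (∀ j ∈ Finset.range p, d j = 0) ∧ (∀ k ∈ Finset.range p, e k = 0) ∧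
      (∀ l ∈ Finset.range p, f l = 0) := by
  haveI hpf : Fact p.Prime := ⟨hp⟩
  haveI : NeZero p := ⟨by omega⟩
  set n := r - 2 with hn
  have hrn : r = n + 2 := by omega
  rw [hrn, show n + 2 - 1 = n + 1 by omega] at h
  have h1 := congrArg (MvPolynomial.aeval ![Polynomial.X, (1 : Polynomial (ZMod p))]) h
  simp only [map_add, map_mul, map_pow, map_sum, map_zero, MvPolynomial.aeval_C,
    MvPolynomial.aeval_X, Matrix.cons_val_zero, Matrix.cons_val_one, Matrix.head_cons,
    Polynomial.algebraMap_eq, one_pow, mul_one] at h1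
  -- arithmetic facts
  have hnpos : 0 < n := by omega
  have hn3p : 3 * p ≤ n := by omega
  have hdig' : p ≤ n % p + (Nat.digits p (n / p)).sum := by
    have hd := Nat.digits_def' (show 1 < p by omega) hnpos
    rw [hd, List.sum_cons] at hdig
    exact hdig
  have hNeq : p * (n / p) + n % p = n := Nat.div_add_mod n p
  have hn0' : n % p + 3 ≤ p := by
    have hmlt : n % p < p := Nat.mod_lt _ (by omega)
    by_contra hcon
    push_neg at hcon
    rcases (by omega : n % p = p - 2 ∨ n % p = p - 1) with he | he
    · exact hr0 ⟨n / p + 1, by rw [Nat.mul_add, mul_one]; omega⟩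
    · exact hr1 ⟨n / p + 1, by rw [Nat.mul_add, mul_one]; omega⟩
  -- the transformed coefficient functions
  set al : ZMod p → ZMod p :=
    fun b => if b = 0 then A else d (b⁻¹).val * (b⁻¹) ^ n with hal_def
  set be : ZMod p → ZMod p :=
    fun b => if b = 0 then D else
      f (b⁻¹).val * (b⁻¹) ^ n - 2 * b * (d (b⁻¹).val * (b⁻¹) ^ n) with hbe_def
  set ga : ZMod p → ZMod p :=
    fun b => if b = 0 then e 0 else
      e b.val + b ^ 2 * (d (b⁻¹).val * (b⁻¹) ^ n) - b * (f (b⁻¹).val * (b⁻¹) ^ n) with hga_def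
  -- the three erased sums
  set Sd : Polynomial (ZMod p) := ∑ b ∈ Finset.univ.erase (0 : ZMod p),
    Polynomial.C (d (b⁻¹).val) * Polynomial.X ^ 2 * (Polynomial.C b⁻¹ * Polynomial.X + 1) ^ n
    with hSd
  set Sf : Polynomial (ZMod p) := ∑ b ∈ Finset.univ.erase (0 : ZMod p),
    Polynomial.C (f (b⁻¹).val) * Polynomial.X * (Polynomial.C b⁻¹ * Polynomial.X + 1) ^ n
    with hSf
  set Se : Polynomial (ZMod p) := ∑ b ∈ Finset.univ.erase (0 : ZMod p),
    Polynomial.C (e b.val) * (Polynomial.X + Polynomial.C b) ^ n with hSe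
  have E2 : (∑ x ∈ Finset.range p, Polynomial.C (d x) * Polynomial.X ^ 2 *
        (Polynomial.C ((x : ℕ) : ZMod p) * Polynomial.X + 1) ^ n)
      = Polynomial.C (d 0) * Polynomial.X ^ 2 + Sd := by
    rw [LinIndepAux6.sum_range_to_univ
        (fun z : ZMod p => Polynomial.C (d z.val) * Polynomial.X ^ 2 *
          (Polynomial.C z * Polynomial.X + 1) ^ n)
        (fun x : ℕ => Polynomial.C (d x) * Polynomial.X ^ 2 *
          (Polynomial.C ((x : ℕ) : ZMod p) * Polynomial.X + 1) ^ n)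
        (fun j hj => by simp only [ZMod.val_cast_of_lt hj])]
    rw [← Finset.add_sum_erase _ _ (Finset.mem_univ (0 : ZMod p))]
    rw [LinIndepAux6.sum_erase_inv
        (fun z : ZMod p => Polynomial.C (d z.val) * Polynomial.X ^ 2 *
          (Polynomial.C z * Polynomial.X + 1) ^ n)]
    congr 1
    · simp
  have E4 : (∑ x ∈ Finset.range p, Polynomial.C (f x) * Polynomial.X *
        (Polynomial.C ((x : ℕ) : ZMod p) * Polynomial.X + 1) ^ n)
      = Polynomial.C (f 0) * Polynomial.X + Sf := by
    rw [LinIndepAux6.sum_range_to_univ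
        (fun z : ZMod p => Polynomial.C (f z.val) * Polynomial.X *
          (Polynomial.C z * Polynomial.X + 1) ^ n)
        (fun x : ℕ => Polynomial.C (f x) * Polynomial.X *
          (Polynomial.C ((x : ℕ) : ZMod p) * Polynomial.X + 1) ^ n)
        (fun j hj => by simp only [ZMod.val_cast_of_lt hj])]
    rw [← Finset.add_sum_erase _ _ (Finset.mem_univ (0 : ZMod p))]
    rw [LinIndepAux6.sum_erase_inv
        (fun z : ZMod p => Polynomial.C (f z.val) * Polynomial.X *
          (Polynomial.C z * Polynomial.X + 1) ^ n)]
    congr 1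
    · simp
  have E3 : (∑ x ∈ Finset.range p, Polynomial.C (e x) *
        (Polynomial.X + Polynomial.C ((x : ℕ) : ZMod p)) ^ n)
      = Polynomial.C (e 0) * Polynomial.X ^ n + Se := by
    rw [LinIndepAux6.sum_range_to_univ
        (fun z : ZMod p => Polynomial.C (e z.val) * (Polynomial.X + Polynomial.C z) ^ n)
        (fun x : ℕ => Polynomial.C (e x) * (Polynomial.X + Polynomial.C ((x : ℕ) : ZMod p)) ^ n)
        (fun j hj => by simp only [ZMod.val_cast_of_lt hj])]
    rw [← Finset.add_sum_erase _ _ (Finset.mem_univ (0 : ZMod p))]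
    congr 1
    simp
  have E1 : (∑ b : ZMod p, (Polynomial.C (al b) * (Polynomial.X + Polynomial.C b) ^ (n+2)
        + Polynomial.C (be b) * (Polynomial.X + Polynomial.C b) ^ (n+1)
        + Polynomial.C (ga b) * (Polynomial.X + Polynomial.C b) ^ n))
      = (Polynomial.C A * Polynomial.X ^ (n+2) + Polynomial.C D * Polynomial.X ^ (n+1)
          + Polynomial.C (e 0) * Polynomial.X ^ n) + (Sd + Sf + Se) := by
    rw [← Finset.add_sum_erase _ _ (Finset.mem_univ (0 : ZMod p))]
    have h0 : Polynomial.C (al 0) * (Polynomial.X + Polynomial.C (0 : ZMod p)) ^ (n+2)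
        + Polynomial.C (be 0) * (Polynomial.X + Polynomial.C (0 : ZMod p)) ^ (n+1)
        + Polynomial.C (ga 0) * (Polynomial.X + Polynomial.C (0 : ZMod p)) ^ n
        = Polynomial.C A * Polynomial.X ^ (n+2) + Polynomial.C D * Polynomial.X ^ (n+1)
          + Polynomial.C (e 0) * Polynomial.X ^ n := by
      simp [hal_def, hbe_def, hga_def]
    rw [h0]
    congr 1
    rw [hSd, hSf, hSe, ← Finset.sum_add_distrib, ← Finset.sum_add_distrib]
    apply Finset.sum_congr rfl
    intro b hb
    have hb0 : b ≠ 0 := Finset.ne_of_mem_erase hb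
    have hpow : (Polynomial.C b⁻¹ * Polynomial.X + 1 : Polynomial (ZMod p)) ^ n
        = Polynomial.C b⁻¹ ^ n * (Polynomial.X + Polynomial.C b) ^ n := by
      rw [show (Polynomial.C b⁻¹ * Polynomial.X + 1 : Polynomial (ZMod p))
          = Polynomial.C b⁻¹ * (Polynomial.X + Polynomial.C b) by
        rw [mul_add, ← Polynomial.C_mul, inv_mul_cancel₀ hb0, Polynomial.C_1], mul_pow]
    rw [hpow]
    simp only [hal_def, hbe_def, hga_def, if_neg hb0]
    simp only [Polynomial.C_mul, Polynomial.C_sub, Polynomial.C_add, Polynomial.C_pow, map_ofNat]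
    ring
  have hQ : (∑ b : ZMod p, (Polynomial.C (al b) * (Polynomial.X + Polynomial.C b) ^ (n+2)
        + Polynomial.C (be b) * (Polynomial.X + Polynomial.C b) ^ (n+1)
        + Polynomial.C (ga b) * (Polynomial.X + Polynomial.C b) ^ n))
      + Polynomial.C (d 0) * Polynomial.X ^ 2 + Polynomial.C (f 0) * Polynomial.X ^ 1
      + Polynomial.C B = 0 := by
    rw [E2, E3, E4] at h1
    rw [E1]
    linear_combination h1
  obtain ⟨halz, hbez, hgaz, hd0, hf0, hB0⟩ :=
    LinIndepAux5.aux hp3 n hn3p hn0' hdig' al be ga (d 0) (f 0) B hQ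
  have hA : A = 0 := by
    have := halz 0
    rw [hal_def] at this
    simpa using this
  have hD : D = 0 := by
    have := hbez 0
    rw [hbe_def] at this
    simpa using this
  have hcast_ne : ∀ j : ℕ, 0 < j → j < p → ((j : ℕ) : ZMod p) ≠ 0 := by
    intro j hj0 hjp
    rw [Ne, ZMod.natCast_eq_zero_iff]
    intro hdvd
    have := Nat.le_of_dvd hj0 hdvd
    omega
  have hdall : ∀ j ∈ Finset.range p, d j = 0 := by
    intro j hj
    rcases Nat.eq_zero_or_pos j with rfl | hjpos
    · exact hd0
    · have hjp := Finset.mem_range.mp hj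
      have hjF := hcast_ne j hjpos hjp
      have hb : ((j : ℕ) : ZMod p)⁻¹ ≠ 0 := inv_ne_zero hjF
      have hz := halz (((j : ℕ) : ZMod p)⁻¹)
      rw [hal_def] at hz
      simp only [if_neg hb, inv_inv] at hz
      rw [ZMod.val_cast_of_lt hjp] at hz
      rcases mul_eq_zero.mp hz with h' | h'
      · exact h'
      · exact absurd h' (pow_ne_zero n hjF)
  have hfall : ∀ l ∈ Finset.range p, f l = 0 := by
    intro j hj
    rcases Nat.eq_zero_or_pos j with rfl | hjpos
    · exact hf0
    · have hjp := Finset.mem_range.mp hj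
      have hjF := hcast_ne j hjpos hjp
      have hb : ((j : ℕ) : ZMod p)⁻¹ ≠ 0 := inv_ne_zero hjF
      have hz := hbez (((j : ℕ) : ZMod p)⁻¹)
      rw [hbe_def] at hz
      simp only [if_neg hb, inv_inv] at hz
      rw [ZMod.val_cast_of_lt hjp, hdall j hj] at hz
      have hz2 : f j * ((j : ℕ) : ZMod p) ^ n = 0 := by linear_combination hz
      rcases mul_eq_zero.mp hz2 with h' | h'
      · exact h'
      · exact absurd h' (pow_ne_zero n hjF)
  have heall : ∀ k ∈ Finset.range p, e k = 0 := by
    intro k hk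
    rcases Nat.eq_zero_or_pos k with rfl | hkpos
    · have := hgaz 0
      rw [hga_def] at this
      simpa using this
    · have hkp := Finset.mem_range.mp hk
      have hkF := hcast_ne k hkpos hkp
      have hz := hgaz ((k : ℕ) : ZMod p)
      rw [hga_def] at hz
      simp only [if_neg hkF] at hz
      rw [ZMod.val_cast_of_lt hkp] at hz
      have hdz : d ((((k : ℕ) : ZMod p)⁻¹).val) = 0 :=
        hdall _ (Finset.mem_range.mpr (ZMod.val_lt _))
      have hfz : f ((((k : ℕ) : ZMod p)⁻¹).val) = 0 :=
        hfall _ (Finset.mem_range.mpr (ZMod.val_lt _))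
      rw [hdz, hfz] at hz
      have : e k = 0 := by linear_combination hz
      exact this
  exact ⟨hA, hB0, hD, hdall, heall, hfall⟩
end

section
/- Let p be a prime and let r_0, t be integers with 1 ≤ t ≤ r_0 - 1 and r_0 ≤ p - 3. Then the 3×3 determinant with rows (C(r_0,t), C(r_0,t+1), C(r_0,t+2)), (C(r_0,t-1), C(r_0,t), C(r_0,t+1)), (C(r_0,t-2), C(r_0,t-1), C(r_0,t)) is nonzero modulo p; in fact it equals the product over i=1,2,3, j=1,...,t, k=1,...,r_0-t of (i+j+k-1)/(i+j+k-2). -/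
open Finset

/-- Binomial coefficient `C(n, k)` for an integer lower index, vanishing for `k < 0`. -/
def chooseZ (n : ℕ) (k : ℤ) : ℤ := if k < 0 then 0 else n.choose k.toNat

/-- The 3×3 binomial matrix with rows `(C(r₀,t), C(r₀,t+1), C(r₀,t+2))`,
`(C(r₀,t-1), C(r₀,t), C(r₀,t+1))`, `(C(r₀,t-2), C(r₀,t-1), C(r₀,t))`. -/
def binomMatrix (r0 : ℕ) (t : ℤ) : Matrix (Fin 3) (Fin 3) ℤ :=
  Matrix.of ![![chooseZ r0 t, chooseZ r0 (t + 1), chooseZ r0 (t + 2)],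
    ![chooseZ r0 (t - 1), chooseZ r0 t, chooseZ r0 (t + 1)],
    ![chooseZ r0 (t - 2), chooseZ r0 (t - 1), chooseZ r0 t]]

lemma tele (G : ℕ → ℚ) (hG : ∀ n, G n ≠ 0) (a : ℕ) :
    ∏ k ∈ Finset.range a, G (k+1) / G k = G a / G 0 := by
  induction a with
  | zero => simp [div_self (hG 0)]
  | succ a ih =>
    rw [Finset.prod_range_succ, ih, div_mul_div_comm, mul_comm (G a),
      mul_div_mul_right _ _ (hG a)]

lemma slab0 (a b : ℕ) :
    (∏ i ∈ range 3, ∏ j ∈ range a, (((i:ℚ)+j+b+2)/((i:ℚ)+j+b+1)))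
      * (((b:ℚ)+1)*((b:ℚ)+2)*((b:ℚ)+3))
    = ((a:ℚ)+b+1)*((a:ℚ)+b+2)*((a:ℚ)+b+3) := by
  rw [Finset.prod_comm]
  set G : ℕ → ℚ := fun j => ((j:ℚ)+b+1)*((j:ℚ)+b+2)*((j:ℚ)+b+3) with hGdef
  have hG : ∀ n, G n ≠ 0 := by intro n; simp only [hGdef]; positivity
  have key : ∀ j : ℕ, (∏ i ∈ range 3, (((i:ℚ)+j+b+2)/((i:ℚ)+j+b+1))) = G (j+1) / G j := by
    intro j
    rw [show (3:ℕ) = 2+1 from rfl, Finset.prod_range_succ,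
      show (2:ℕ) = 1+1 from rfl, Finset.prod_range_succ, Finset.prod_range_one]
    rw [div_mul_div_comm, div_mul_div_comm]
    rw [div_eq_div_iff (by positivity) (by positivity)]
    simp only [hGdef]
    push_cast
    ring
  rw [Finset.prod_congr rfl (fun j _ => key j), tele G hG a]
  rw [div_mul_eq_mul_div, div_eq_iff (hG 0)]
  simp only [hGdef]
  push_cast
  ring

lemma prodP0 (a b : ℕ) :
    (∏ i ∈ range 3, ∏ j ∈ range a, ∏ k ∈ range b, (((i:ℚ)+j+k+2)/((i:ℚ)+j+k+1)))
      * (((a:ℚ)+1)^2 * ((a:ℚ)+2) * ((b:ℚ)+1)^2 * ((b:ℚ)+2))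
    = 2 * (((a+b).choose a : ℚ))^3 * ((a:ℚ)+b+1)^2 * ((a:ℚ)+b+2) := by
  induction b with
  | zero => simp [Nat.choose_self]; ring
  | succ b ih =>
    have h1 : ∀ i j : ℕ,
        (∏ k ∈ range (b+1), (((i:ℚ)+j+k+2)/((i:ℚ)+j+k+1)))
        = (∏ k ∈ range b, (((i:ℚ)+j+k+2)/((i:ℚ)+j+k+1)))
          * (((i:ℚ)+j+b+2)/((i:ℚ)+j+b+1)) :=
      fun i j => Finset.prod_range_succ _ b
    simp only [h1, Finset.prod_mul_distrib]
    set P := ∏ i ∈ range 3, ∏ j ∈ range a, ∏ k ∈ range b,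
        (((i:ℚ)+j+k+2)/((i:ℚ)+j+k+1)) with hPdef
    set S := ∏ i ∈ range 3, ∏ j ∈ range a, (((i:ℚ)+j+b+2)/((i:ℚ)+j+b+1)) with hSdef
    have hs := slab0 a b
    have hsymm : (a+b).choose b = (a+b).choose a := by
      rw [← Nat.choose_symm (Nat.le_add_right a b)]; congr 1; omega
    have hsymm1 : (a+b+1).choose (b+1) = (a+b+1).choose a := by
      rw [← Nat.choose_symm (show a ≤ a+b+1 by omega)]; congr 1; omega
    have hrec : ((a+b+1).choose a : ℚ) * ((b:ℚ)+1) = ((a:ℚ)+(b:ℚ)+1) * (((a+b).choose a : ℚ)) := by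
      have h := Nat.add_one_mul_choose_eq (a+b) b
      rw [hsymm, hsymm1] at h
      have h2 := congrArg (fun n : ℕ => (n : ℚ)) h
      push_cast at h2
      linarith
    have hcube : ((a+b+1).choose a : ℚ)^3 * ((b:ℚ)+1)^3
        = ((a:ℚ)+(b:ℚ)+1)^3 * (((a+b).choose a : ℚ))^3 := by
      have := congrArg (fun x : ℚ => x^3) hrec
      simpa [mul_pow] using this
    rw [show a + (b+1) = a + b + 1 from by omega]
    push_cast
    refine mul_right_cancel₀ (b := ((((a:ℚ)+1)^2 * ((a:ℚ)+2) * ((b:ℚ)+1)^2 * ((b:ℚ)+2))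
      * (((b:ℚ)+1)*((b:ℚ)+2)*((b:ℚ)+3)))) (by positivity) ?_
    linear_combination (S * (((a:ℚ)+1)^2*((a:ℚ)+2)*((b:ℚ)+2)^2*((b:ℚ)+3))
        * (((b:ℚ)+1)*((b:ℚ)+2)*((b:ℚ)+3))) * ih
      + ((2 * (((a+b).choose a : ℚ))^3 * ((a:ℚ)+(b:ℚ)+1)^2 * ((a:ℚ)+(b:ℚ)+2))
        * (((a:ℚ)+1)^2*((a:ℚ)+2)*((b:ℚ)+2)^2*((b:ℚ)+3))) * hs
      - (2 * ((a:ℚ)+(b:ℚ)+2)^2 * ((a:ℚ)+(b:ℚ)+3) * ((a:ℚ)+1)^2 * ((a:ℚ)+2)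
        * ((b:ℚ)+2)^2 * ((b:ℚ)+3)) * hcube

lemma icc_range (n : ℕ) (f : ℕ → ℚ) : ∏ i ∈ Icc (1:ℕ) n, f i = ∏ i ∈ range n, f (i+1) := by
  induction n with
  | zero => simp
  | succ n ih => rw [Finset.prod_Icc_succ_top (by omega), Finset.prod_range_succ, ih]

lemma prodP (a b : ℕ) :
    (∏ i ∈ Finset.Icc (1:ℕ) 3, ∏ j ∈ Finset.Icc (1:ℕ) a, ∏ k ∈ Finset.Icc (1:ℕ) b,
        (((i:ℚ) + j + k - 1) / ((i:ℚ) + j + k - 2)))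
      * (((a:ℚ)+1)^2 * ((a:ℚ)+2) * ((b:ℚ)+1)^2 * ((b:ℚ)+2))
    = 2 * (((a+b).choose a : ℚ))^3 * ((a:ℚ)+b+1)^2 * ((a:ℚ)+b+2) := by
  have conv : (∏ i ∈ Finset.Icc (1:ℕ) 3, ∏ j ∈ Finset.Icc (1:ℕ) a, ∏ k ∈ Finset.Icc (1:ℕ) b,
        (((i:ℚ) + j + k - 1) / ((i:ℚ) + j + k - 2)))
      = ∏ i ∈ range 3, ∏ j ∈ range a, ∏ k ∈ range b, (((i:ℚ)+j+k+2)/((i:ℚ)+j+k+1)) := by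
    rw [icc_range]
    refine Finset.prod_congr rfl (fun i _ => ?_)
    rw [icc_range]
    refine Finset.prod_congr rfl (fun j _ => ?_)
    rw [icc_range]
    refine Finset.prod_congr rfl (fun k _ => ?_)
    push_cast
    ring_nf
  rw [conv]
  exact prodP0 a b

lemma chooseZ_natCast (n m : ℕ) : chooseZ n ((m:ℕ):ℤ) = (n.choose m : ℤ) := by
  unfold chooseZ
  rw [if_neg (by exact Int.not_lt.mpr (Int.natCast_nonneg m))]
  simp

lemma det_eq (r0 t : ℕ) (ht : 1 ≤ t) (htr : t + 1 ≤ r0) :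
    ((binomMatrix r0 (t:ℤ)).det : ℚ)
      * (((t:ℚ)+1)^2 * ((t:ℚ)+2) * (((r0-t:ℕ):ℚ)+1)^2 * (((r0-t:ℕ):ℚ)+2))
    = 2 * ((r0.choose t : ℚ))^3 * ((r0:ℚ)+1)^2 * ((r0:ℚ)+2) := by
  set b := r0 - t with hbdef
  have hbe : r0 = t + b := by omega
  have hb1 : 1 ≤ b := by omega
  have c00 : chooseZ r0 (t:ℤ) = (r0.choose t : ℤ) := chooseZ_natCast r0 t
  have c01 : chooseZ r0 ((t:ℤ)+1) = (r0.choose (t+1) : ℤ) := by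
    rw [show (t:ℤ)+1 = ((t+1:ℕ):ℤ) by push_cast; ring]; exact chooseZ_natCast r0 (t+1)
  have c02 : chooseZ r0 ((t:ℤ)+2) = (r0.choose (t+2) : ℤ) := by
    rw [show (t:ℤ)+2 = ((t+2:ℕ):ℤ) by push_cast; ring]; exact chooseZ_natCast r0 (t+2)
  have c10 : chooseZ r0 ((t:ℤ)-1) = (r0.choose (t-1) : ℤ) := by
    rw [show (t:ℤ)-1 = ((t-1:ℕ):ℤ) by omega]; exact chooseZ_natCast r0 (t-1)
  have h1 : (r0.choose (t+1) : ℚ) * ((t:ℚ)+1) = (r0.choose t : ℚ) * (b:ℚ) := by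
    have h := Nat.choose_succ_right_eq r0 t
    rw [show r0 - t = b from rfl] at h
    exact_mod_cast congrArg (fun n : ℕ => (n:ℚ)) h
  have h2 : (r0.choose (t+2) : ℚ) * ((t:ℚ)+2) = (r0.choose (t+1) : ℚ) * ((b:ℚ)-1) := by
    have h := Nat.choose_succ_right_eq r0 (t+1)
    rw [show r0 - (t+1) = b - 1 by omega] at h
    have h' := congrArg (fun n : ℕ => (n:ℚ)) h
    push_cast [Nat.cast_sub hb1] at h'
    linarith
  have h3 : (r0.choose t : ℚ) * (t:ℚ) = (r0.choose (t-1) : ℚ) * ((b:ℚ)+1) := by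
    have h := Nat.choose_succ_right_eq r0 (t-1)
    rw [show (t-1)+1 = t by omega, show r0 - (t-1) = b + 1 by omega] at h
    have h' := congrArg (fun n : ℕ => (n:ℚ)) h
    push_cast at h'
    linarith
  have h4 : ((chooseZ r0 ((t:ℤ)-2) : ℤ) : ℚ) * ((b:ℚ)+2)
      = (r0.choose (t-1) : ℚ) * ((t:ℚ)-1) := by
    rcases eq_or_lt_of_le ht with h | h
    · have ht1 : t = 1 := h.symm
      subst ht1
      have hz : chooseZ r0 (((1:ℕ):ℤ)-2) = 0 := by
        rw [show ((1:ℕ):ℤ)-2 = -1 by norm_num]; simp [chooseZ]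
      rw [hz]
      norm_num
    · have ht2 : 2 ≤ t := h
      have hz : chooseZ r0 ((t:ℤ)-2) = (r0.choose (t-2) : ℤ) := by
        rw [show (t:ℤ)-2 = ((t-2:ℕ):ℤ) by omega]; exact chooseZ_natCast r0 (t-2)
      have h := Nat.choose_succ_right_eq r0 (t-2)
      rw [show (t-2)+1 = t-1 by omega, show r0 - (t-2) = b + 2 by omega] at h
      have h' := congrArg (fun n : ℕ => (n:ℚ)) h
      push_cast [Nat.cast_sub ht, Nat.cast_sub ht2] at h'
      rw [hz]
      push_cast
      linarith
  have nt1 : ((t:ℚ)+1) ≠ 0 := by positivity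
  have nt2 : ((t:ℚ)+2) ≠ 0 := by positivity
  have nb1 : ((b:ℚ)+1) ≠ 0 := by positivity
  have nb2 : ((b:ℚ)+2) ≠ 0 := by positivity
  have hx1v : (r0.choose (t+1) : ℚ) = (r0.choose t : ℚ) * (b:ℚ) / ((t:ℚ)+1) := by
    rw [eq_div_iff nt1]; exact h1
  have hx2v : (r0.choose (t+2) : ℚ) = (r0.choose (t+1) : ℚ) * ((b:ℚ)-1) / ((t:ℚ)+2) := by
    rw [eq_div_iff nt2]; exact h2
  have hy1v : (r0.choose (t-1) : ℚ) = (r0.choose t : ℚ) * (t:ℚ) / ((b:ℚ)+1) := by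
    rw [eq_div_iff nb1]; linarith
  have hy2v : ((chooseZ r0 ((t:ℤ)-2) : ℤ) : ℚ)
      = (r0.choose (t-1) : ℚ) * ((t:ℚ)-1) / ((b:ℚ)+2) := by
    rw [eq_div_iff nb2]; exact h4
  rw [Matrix.det_fin_three]
  simp only [binomMatrix, Matrix.of_apply, Matrix.cons_val', Matrix.cons_val_zero,
    Matrix.cons_val_one, Matrix.head_cons, Matrix.empty_val', Matrix.cons_val_fin_one,
    Matrix.head_fin_const, Matrix.cons_val_two, Matrix.tail_cons]
  rw [c00, c01, c02, c10]
  push_cast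
  rw [hy2v, hx2v, hx1v, hy1v,
    show ((r0:ℚ)) = (t:ℚ)+(b:ℚ) by rw [hbe]; push_cast; ring]
  field_simp
  ring


/-- Krattenthaler-type determinant evaluation: for `1 ≤ t ≤ r₀-1` and `r₀ ≤ p-3`, the
3×3 binomial determinant is nonzero mod `p` and equals the stated product of ratios. -/
theorem binomial_det_ne_zero (p : ℕ) (hp : p.Prime) (r0 t : ℕ)
    (ht : 1 ≤ t) (ht' : t ≤ r0 - 1) (hr0 : r0 ≤ p - 3) :
    (((binomMatrix r0 (t : ℤ)).det : ZMod p) ≠ 0) ∧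
      (((binomMatrix r0 (t : ℤ)).det : ℚ) =
        ∏ i ∈ Finset.Icc (1 : ℕ) 3, ∏ j ∈ Finset.Icc (1 : ℕ) t, ∏ k ∈ Finset.Icc (1 : ℕ) (r0 - t),
          (((i : ℚ) + j + k - 1) / ((i : ℚ) + j + k - 2))) := by
  have htr : t + 1 ≤ r0 := by omega
  set b := r0 - t with hbdef
  have hb1 : 1 ≤ b := by omega
  have hbe : r0 = t + b := by omega
  have hD := det_eq r0 t ht htr
  have hP := prodP t b
  rw [show t + b = r0 by omega] at hP
  rw [show ((t:ℚ)+(b:ℚ)+1) = (r0:ℚ)+1 by rw [hbe]; push_cast; ring,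
    show ((t:ℚ)+(b:ℚ)+2) = (r0:ℚ)+2 by rw [hbe]; push_cast; ring] at hP
  have hDne : (((t:ℚ)+1)^2 * ((t:ℚ)+2) * ((b:ℚ)+1)^2 * ((b:ℚ)+2)) ≠ 0 := by positivity
  constructor
  · -- integer identity
    have hint : (binomMatrix r0 (t:ℤ)).det * (((t:ℤ)+1)^2 * ((t:ℤ)+2) * ((b:ℤ)+1)^2 * ((b:ℤ)+2))
        = 2 * (r0.choose t : ℤ)^3 * ((r0:ℤ)+1)^2 * ((r0:ℤ)+2) := by
      exact_mod_cast hD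
    haveI : Fact p.Prime := ⟨hp⟩
    have hp5 : 5 ≤ p := by
      have := hp.two_le; omega
    have key : ∀ n : ℕ, 0 < n → n < p → ((n:ℕ) : ZMod p) ≠ 0 := by
      intro n h1 h2 h3
      rw [ZMod.natCast_eq_zero_iff] at h3
      exact absurd (Nat.le_of_dvd h1 h3) (by omega)
    have hcp : ((r0.choose t : ℕ) : ZMod p) ≠ 0 := by
      rw [Ne, ZMod.natCast_eq_zero_iff]
      intro hdvd
      have hdvd2 : p ∣ r0.factorial := by
        refine hdvd.trans ⟨t.factorial * (r0-t).factorial, ?_⟩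
        rw [← Nat.choose_mul_factorial_mul_factorial (show t ≤ r0 by omega), mul_assoc]
      rw [Nat.Prime.dvd_factorial hp] at hdvd2
      omega
    intro hdet0
    have hmod := congrArg (fun z : ℤ => (z : ZMod p)) hint
    beta_reduce at hmod
    rw [Int.cast_mul, hdet0, zero_mul] at hmod
    push_cast at hmod
    have k2 : ((2:ℕ) : ZMod p) ≠ 0 := key 2 (by omega) (by omega)
    have kr1 : ((r0:ZMod p)+1) ≠ 0 := by
      have := key (r0+1) (by omega) (by omega); push_cast at this; exact this
    have kr2 : ((r0:ZMod p)+2) ≠ 0 := by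
      have := key (r0+2) (by omega) (by omega); push_cast at this; exact this
    have : (2 * ((r0.choose t : ℕ) : ZMod p)^3 * ((r0:ZMod p)+1)^2 * ((r0:ZMod p)+2)) ≠ 0 := by
      push_cast at k2
      exact mul_ne_zero (mul_ne_zero (mul_ne_zero k2 (pow_ne_zero _ hcp)) (pow_ne_zero _ kr1)) kr2
    exact this hmod.symm
  · exact mul_right_cancel₀ hDne (hD.trans hP.symm)
end

section
/- Let p ≥ 5 be a prime, let a be in {4,...,p+1}, and let r be an integer with r ≡ a (mod p-1) and r ≡ a (mod p) and r > (a-1)p. Then there exist integers β_j, indexed by the integers j with a-1 ≤ j < r-1 and j ≡ a-1 (mod p-1), such that β_j ≡ C(r,j) (mod p) for all such j, and for each n in {0,1,2,3} the sum Σ_{j ≥ n} C(j,n) β_j is congruent to 0 modulo p^{4-n}. -/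
open Finset

/-- Sum of powers over units of `ZMod p`. -/
lemma my_unit_sum (p : ℕ) [Fact p.Prime] (i : ℕ) :
    (∑ t : (ZMod p)ˣ, ((t : ZMod p)) ^ i) = if (p - 1) ∣ i then -1 else 0 := by
  classical
  have h := FiniteField.sum_pow_units (ZMod p) i
  rw [ZMod.card] at h
  simpa using h

/-- Character-sum expression for the filtered binomial sum. -/
lemma my_char_sum (p : ℕ) [Fact p.Prime] (m e : ℕ) :
    ∑ i ∈ (range (m + 1)).filter (fun i => (p - 1) ∣ (i + e)),
        ((m.choose i : ZMod p)) =
      -∑ t : (ZMod p)ˣ, ((t : ZMod p)) ^ e * (1 + (t : ZMod p)) ^ m := by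
  classical
  have key : ∀ t : (ZMod p)ˣ, ((t : ZMod p)) ^ e * (1 + (t : ZMod p)) ^ m
      = ∑ i ∈ range (m + 1), (m.choose i : ZMod p) * ((t : ZMod p)) ^ (i + e) := by
    intro t
    rw [add_comm (1 : ZMod p), add_pow, Finset.mul_sum]
    refine Finset.sum_congr rfl fun i _ => ?_
    rw [pow_add]
    ring
  rw [Finset.sum_congr rfl fun t _ => key t, Finset.sum_comm]
  have : ∀ i ∈ range (m + 1),
      (∑ t : (ZMod p)ˣ, (m.choose i : ZMod p) * ((t : ZMod p)) ^ (i + e))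
        = if (p - 1) ∣ (i + e) then -(m.choose i : ZMod p) else 0 := by
    intro i _
    rw [← Finset.mul_sum, my_unit_sum p (i + e)]
    split_ifs <;> ring
  rw [Finset.sum_congr rfl this, Finset.sum_ite, Finset.sum_const_zero, add_zero,
    ← Finset.sum_neg_distrib]
  simp

/-- reduce exponents mod `p - 1`. -/
lemma my_pow_reduce (p : ℕ) [Fact p.Prime] (x : ZMod p) (A m : ℕ)
    (hA : 1 ≤ A) (hAm : A ≤ m) (hmod : m % (p - 1) = A % (p - 1)) :
    x ^ m = x ^ A := by
  by_cases hx : x = 0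
  · subst hx
    rw [zero_pow (by omega), zero_pow (by omega)]
  · have hd : (p - 1) ∣ m - A := (Nat.modEq_iff_dvd' hAm).mp (hmod.symm)
    obtain ⟨k, hk⟩ := hd
    have hm : m = A + (p - 1) * k := by omega
    rw [hm, pow_add, pow_mul, ZMod.pow_card_sub_one_eq_one hx, one_pow, mul_one]

lemma my_choose_pred (n : ℕ) (h : 1 ≤ n) : n.choose (n - 1) = n := by
  have h1 : n - (n - 1) = 1 := by omega
  have h2 := Nat.choose_symm (show n - 1 ≤ n by omega)
  rw [h1, Nat.choose_one_right] at h2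
  exact h2.symm

lemma my_core (p : ℕ) [Fact p.Prime] (hp5 : 5 ≤ p) (A m : ℕ)
    (hA1 : 1 ≤ A) (hAp : A ≤ p + 1) (hm : A + p ≤ m)
    (hmq : m % (p - 1) = A % (p - 1)) (hmp : m % p = A % p) :
    ∑ i ∈ (Finset.Ico (A - 1) (m - 1)).filter
        (fun i => i % (p - 1) = (A - 1) % (p - 1)),
      ((m.choose i : ZMod p)) = 0 := by
  classical
  set c := A - 1 with hc
  set e := c * (p - 2) with he
  have hec : e + c = c * (p - 1) := by
    have h2 : p - 2 + 1 = p - 1 := by omega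
    calc e + c = c * (p - 2 + 1) := by ring
    _ = c * (p - 1) := by rw [h2]
  -- the divisibility predicate is the congruence predicate
  have hiff : ∀ i : ℕ, ((p - 1) ∣ (i + e)) ↔ i % (p - 1) = c % (p - 1) := by
    intro i
    constructor
    · intro hd
      have h0 : i + e ≡ 0 [MOD p - 1] := Nat.modEq_zero_iff_dvd.mpr hd
      have h3 := h0.add_right c
      have h4 : i + e + c = i + c * (p - 1) := by omega
      rw [h4] at h3
      have h5 : (i + c * (p - 1)) % (p - 1) = i % (p - 1) := Nat.add_mul_mod_self_right ..
      unfold Nat.ModEq at h3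
      rw [h5] at h3
      simpa using h3
    · intro hmodc
      have h3 : i + e ≡ c + e [MOD p - 1] := Nat.ModEq.add_right e (show Nat.ModEq (p-1) i c from hmodc)
      have h4 : c + e = c * (p - 1) := by omega
      rw [h4] at h3
      have h5 : c * (p - 1) ≡ 0 [MOD p - 1] :=
        Nat.modEq_zero_iff_dvd.mpr ⟨c, mul_comm _ _⟩
      exact Nat.modEq_zero_iff_dvd.mp (h3.trans h5)
  have hq1 : ¬ ((p - 1) ∣ 1) := by
    intro h
    have := Nat.le_of_dvd one_pos h
    omega
  -- m and A are not congruent to c mod p-1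
  have hmnotc : ¬ (m % (p - 1) = c % (p - 1)) := by
    intro h
    rw [hmq] at h
    have hA' : c + 1 = A := by omega
    have : c ≡ c + 1 [MOD p - 1] := by rw [hA']; exact h.symm
    have hd := (Nat.modEq_iff_dvd' (by omega)).mp this
    have h7 : c + 1 - c = 1 := by omega
    rw [h7] at hd
    exact hq1 hd
  have hAnotc : ¬ (A % (p - 1) = c % (p - 1)) := by
    intro h
    exact hmnotc (hmq.trans h)
  have hm1c : (m - 1) % (p - 1) = c % (p - 1) := by
    have h5 : m - 1 + 1 = m := by omega
    have h6 : c + 1 = A := by omega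
    have : (m - 1) + 1 ≡ c + 1 [MOD p - 1] := by rw [h5, h6]; exact hmq
    exact Nat.ModEq.add_right_cancel' 1 this
  have hmA : (m : ZMod p) = (A : ZMod p) := (ZMod.natCast_eq_natCast_iff' _ _ _).mpr hmp
  -- character sums: full sum for m equals full sum for A
  have hfull : ∑ i ∈ (range (m + 1)).filter (fun i => (p - 1) ∣ (i + e)),
        ((m.choose i : ZMod p))
      = ∑ i ∈ (range (A + 1)).filter (fun i => (p - 1) ∣ (i + e)),
        ((A.choose i : ZMod p)) := by
    rw [my_char_sum, my_char_sum, neg_inj]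
    refine Finset.sum_congr rfl fun t _ => ?_
    rw [my_pow_reduce p (1 + (t : ZMod p)) A m hA1 (by omega) hmq]
  -- split the full sum for m
  have hsplit := Finset.sum_filter_add_sum_filter_not
    ((range (m + 1)).filter (fun i => (p - 1) ∣ (i + e)))
    (fun i => i ∈ Finset.Ico c (m - 1)) (fun i => (m.choose i : ZMod p))
  have hinner : ((range (m + 1)).filter (fun i => (p - 1) ∣ (i + e))).filter
        (fun i => i ∈ Finset.Ico c (m - 1))
      = (Finset.Ico c (m - 1)).filter (fun i => i % (p - 1) = c % (p - 1)) := by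
    ext i
    simp only [Finset.mem_filter, Finset.mem_range, Finset.mem_Ico, hiff i]
    constructor
    · rintro ⟨⟨h1, h2⟩, h3, h4⟩
      exact ⟨⟨h3, h4⟩, h2⟩
    · rintro ⟨⟨h3, h4⟩, h2⟩
      exact ⟨⟨by omega, h2⟩, h3, h4⟩
  have hchoose1 : (m.choose (m - 1) : ZMod p) = (A : ZMod p) := by
    rw [my_choose_pred m (by omega)]; exact hmA
  have hchoose2 : (A.choose c : ZMod p) = (A : ZMod p) := by
    rw [hc, my_choose_pred A hA1]
  by_cases hqc : p - 1 ≤ c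
  · -- boundary has two elements
    have hB : ((range (m + 1)).filter (fun i => (p - 1) ∣ (i + e))).filter
          (fun i => ¬ i ∈ Finset.Ico c (m - 1)) = {c - (p - 1), m - 1} := by
      ext i
      simp only [Finset.mem_filter, Finset.mem_range, Finset.mem_Ico, hiff i,
        Finset.mem_insert, Finset.mem_singleton, not_and, not_lt]
      constructor
      · rintro ⟨⟨h1, h2⟩, h3⟩
        by_cases hci : c ≤ i
        · have h4 : m - 1 ≤ i := h3 hci
          have h5 : i = m - 1 ∨ i = m := by omega
          rcases h5 with h5 | h5
          · right; exact h5
          · exfalso; rw [h5] at h2; exact hmnotc h2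
        · left
          push_neg at hci
          have hd : (p - 1) ∣ c - i :=
            (Nat.modEq_iff_dvd' (le_of_lt hci)).mp (show Nat.ModEq (p-1) i c from h2)
          obtain ⟨k, hk⟩ := hd
          have hk2 : k ≤ 1 := by
            by_contra hcon
            push_neg at hcon
            have hmul : (p - 1) * 2 ≤ (p - 1) * k := Nat.mul_le_mul_left _ hcon
            rw [← hk] at hmul
            omega
          interval_cases k <;> omega
      · rintro (h | h) <;> subst h
        · refine ⟨⟨by omega, ?_⟩, by omega⟩
          have h8 : c - (c - (p - 1)) = p - 1 := by omega
          exact ((Nat.modEq_iff_dvd' (show c - (p - 1) ≤ c by omega)).mpr (by rw [h8]))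
        · exact ⟨⟨by omega, hm1c⟩, by omega⟩
    have hFA : (range (A + 1)).filter (fun i => (p - 1) ∣ (i + e)) = {c - (p - 1), c} := by
      ext i
      simp only [Finset.mem_filter, Finset.mem_range, hiff i,
        Finset.mem_insert, Finset.mem_singleton]
      constructor
      · rintro ⟨h1, h2⟩
        by_cases hci : c ≤ i
        · have h5 : i = c ∨ i = A := by omega
          rcases h5 with h5 | h5
          · right; exact h5
          · exfalso; rw [h5] at h2; exact hAnotc h2
        · left
          push_neg at hci
          have hd : (p - 1) ∣ c - i :=
            (Nat.modEq_iff_dvd' (le_of_lt hci)).mp (show Nat.ModEq (p-1) i c from h2)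
          obtain ⟨k, hk⟩ := hd
          have hk2 : k ≤ 1 := by
            by_contra hcon
            push_neg at hcon
            have hmul : (p - 1) * 2 ≤ (p - 1) * k := Nat.mul_le_mul_left _ hcon
            rw [← hk] at hmul
            omega
          interval_cases k <;> omega
      · rintro (h | h) <;> subst h
        · refine ⟨by omega, ?_⟩
          have h8 : c - (c - (p - 1)) = p - 1 := by omega
          exact ((Nat.modEq_iff_dvd' (show c - (p - 1) ≤ c by omega)).mpr (by rw [h8]))
        · exact ⟨by omega, rfl⟩
    have e1 : ∑ i ∈ ({c - (p - 1), m - 1} : Finset ℕ), ((m.choose i : ZMod p))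
        = (m.choose (c - (p - 1)) : ZMod p) + (m.choose (m - 1) : ZMod p) :=
      Finset.sum_pair (by omega)
    have e2 : ∑ i ∈ ({c - (p - 1), c} : Finset ℕ), ((A.choose i : ZMod p))
        = (A.choose (c - (p - 1)) : ZMod p) + (A.choose c : ZMod p) :=
      Finset.sum_pair (by omega)
    have hchoose3 : (m.choose (c - (p - 1)) : ZMod p) = (A.choose (c - (p - 1)) : ZMod p) := by
      have hd : c - (p - 1) = 0 ∨ c - (p - 1) = 1 := by omega
      rcases hd with hd | hd <;> rw [hd]
      · simp
      · simp [Nat.choose_one_right, hmA]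
    rw [hinner, hB, e1, hfull, hFA, e2] at hsplit
    rw [hchoose3, hchoose1, hchoose2] at hsplit
    linear_combination hsplit
  · -- boundary is a singleton
    have hB : ((range (m + 1)).filter (fun i => (p - 1) ∣ (i + e))).filter
          (fun i => ¬ i ∈ Finset.Ico c (m - 1)) = {m - 1} := by
      ext i
      simp only [Finset.mem_filter, Finset.mem_range, Finset.mem_Ico, hiff i,
        Finset.mem_singleton, not_and, not_lt]
      constructor
      · rintro ⟨⟨h1, h2⟩, h3⟩
        by_cases hci : c ≤ i
        · have h4 : m - 1 ≤ i := h3 hci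
          have h5 : i = m - 1 ∨ i = m := by omega
          rcases h5 with h5 | h5
          · exact h5
          · exfalso; rw [h5] at h2; exact hmnotc h2
        · exfalso
          push_neg at hci
          have hd : (p - 1) ∣ c - i :=
            (Nat.modEq_iff_dvd' (le_of_lt hci)).mp (show Nat.ModEq (p-1) i c from h2)
          obtain ⟨k, hk⟩ := hd
          rcases Nat.eq_zero_or_pos k with hk0 | hk0
          · rw [hk0, Nat.mul_zero] at hk; omega
          · have h9 : p - 1 ≤ c - i := by
              calc p - 1 = (p - 1) * 1 := (Nat.mul_one _).symm
                _ ≤ (p - 1) * k := Nat.mul_le_mul_left _ hk0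
                _ = c - i := hk.symm
            omega
      · rintro h; subst h
        exact ⟨⟨by omega, hm1c⟩, by omega⟩
    have hFA : (range (A + 1)).filter (fun i => (p - 1) ∣ (i + e)) = {c} := by
      ext i
      simp only [Finset.mem_filter, Finset.mem_range, hiff i, Finset.mem_singleton]
      constructor
      · rintro ⟨h1, h2⟩
        by_cases hci : c ≤ i
        · have h5 : i = c ∨ i = A := by omega
          rcases h5 with h5 | h5
          · exact h5
          · exfalso; rw [h5] at h2; exact hAnotc h2
        · exfalso
          push_neg at hci
          have hd : (p - 1) ∣ c - i :=
            (Nat.modEq_iff_dvd' (le_of_lt hci)).mp (show Nat.ModEq (p-1) i c from h2)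
          obtain ⟨k, hk⟩ := hd
          rcases Nat.eq_zero_or_pos k with hk0 | hk0
          · rw [hk0, Nat.mul_zero] at hk; omega
          · have h9 : p - 1 ≤ c - i := by
              calc p - 1 = (p - 1) * 1 := (Nat.mul_one _).symm
                _ ≤ (p - 1) * k := Nat.mul_le_mul_left _ hk0
                _ = c - i := hk.symm
            omega
      · rintro h; subst h
        exact ⟨by omega, rfl⟩
    rw [hinner, hB, Finset.sum_singleton, hfull, hFA, Finset.sum_singleton] at hsplit
    rw [hchoose1, hchoose2] at hsplit
    linear_combination hsplit

lemma my_rbound (p a r : ℕ) (hp5 : 5 ≤ p) (ha : 4 ≤ a) (ha' : a ≤ p + 1)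
    (hr : (a - 1) * p < r) : a + 2 * p ≤ r + 1 := by
  have h2 : (a - 3) * p + 2 * p = (a - 1) * p := by
    have h0 : a - 3 + 2 = a - 1 := by omega
    calc (a - 3) * p + 2 * p = (a - 3 + 2) * p := by ring
      _ = (a - 1) * p := by rw [h0]
  have h3 : p ≤ (a - 3) * p := Nat.le_mul_of_pos_left p (by omega)
  omega

lemma my_Svanish (p : ℕ) [Fact p.Prime] (hp5 : 5 ≤ p) (a r n : ℕ)
    (ha : 4 ≤ a) (ha' : a ≤ p + 1) (hn : n ≤ 3)
    (hra : r ≡ a [MOD p - 1]) (hrap : r ≡ a [MOD p]) (hr : (a - 1) * p < r) :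
    (p : ℤ) ∣ ∑ j ∈ ((Finset.Ico (a - 1) (r - 1)).filter
        (fun j => j % (p - 1) = (a - 1) % (p - 1) ∧ n ≤ j)),
      (j.choose n : ℤ) * (r.choose j : ℤ) := by
  classical
  have hrbig : a + 2 * p ≤ r + 1 := my_rbound p a r hp5 ha ha' hr
  rw [← ZMod.intCast_zmod_eq_zero_iff_dvd]
  push_cast
  have hfe : (Finset.Ico (a - 1) (r - 1)).filter
        (fun j => j % (p - 1) = (a - 1) % (p - 1) ∧ n ≤ j)
      = (Finset.Ico (a - 1) (r - 1)).filter
        (fun j => j % (p - 1) = (a - 1) % (p - 1)) := by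
    refine Finset.filter_congr fun j hj => ?_
    rw [Finset.mem_Ico] at hj
    constructor
    · rintro ⟨h1, _⟩; exact h1
    · intro h1; exact ⟨h1, by omega⟩
  rw [hfe]
  have hterm : ∀ j ∈ (Finset.Ico (a - 1) (r - 1)).filter
      (fun j => j % (p - 1) = (a - 1) % (p - 1)),
      ((j.choose n : ZMod p)) * ((r.choose j : ZMod p))
        = (r.choose n : ZMod p) * (((r - n).choose (j - n) : ZMod p)) := by
    intro j hj
    simp only [Finset.mem_filter, Finset.mem_Ico] at hj
    have h1 : n ≤ j := by omega
    have h2 : j ≤ r := by omega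
    have h3 : r.choose j * j.choose n = r.choose n * (r - n).choose (j - n) := Nat.choose_mul h1
    calc (j.choose n : ZMod p) * ((r.choose j : ZMod p))
        = ((r.choose j * j.choose n : ℕ) : ZMod p) := by push_cast; ring
      _ = ((r.choose n * (r - n).choose (j - n) : ℕ) : ZMod p) := by rw [h3]
      _ = _ := by push_cast; ring
  rw [Finset.sum_congr rfl hterm, ← Finset.mul_sum]
  have hre : ∑ j ∈ (Finset.Ico (a - 1) (r - 1)).filter
        (fun j => j % (p - 1) = (a - 1) % (p - 1)),
        (((r - n).choose (j - n) : ZMod p))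
      = ∑ i ∈ (Finset.Ico ((a - n) - 1) ((r - n) - 1)).filter
          (fun i => i % (p - 1) = ((a - n) - 1) % (p - 1)),
        (((r - n).choose i : ZMod p)) := by
    refine Finset.sum_nbij' (fun j => j - n) (fun i => i + n) ?_ ?_ ?_ ?_ ?_
    · intro j hj
      simp only [Finset.mem_filter, Finset.mem_Ico] at hj ⊢
      refine ⟨⟨by omega, by omega⟩, ?_⟩
      have h4 : (j - n) + n = j := by omega
      have h5 : ((a - n) - 1) + n = a - 1 := by omega
      refine Nat.ModEq.add_right_cancel' n ?_
      rw [h4, h5]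
      exact hj.2
    · intro i hi
      simp only [Finset.mem_filter, Finset.mem_Ico] at hi ⊢
      refine ⟨⟨by omega, by omega⟩, ?_⟩
      have h5 : ((a - n) - 1) + n = a - 1 := by omega
      have := Nat.ModEq.add_right n (show Nat.ModEq (p-1) i ((a - n) - 1) from hi.2)
      rw [h5] at this
      exact this
    · intro j hj
      simp only [Finset.mem_filter, Finset.mem_Ico] at hj
      show j - n + n = j
      omega
    · intro i hi
      simp only [Finset.mem_filter, Finset.mem_Ico] at hi
      show i + n - n = i
      omega
    · intro j _; rfl
  rw [hre]
  have hc := my_core p hp5 (a - n) (r - n) (by omega) (by omega) (by omega)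
    (by
      refine Nat.ModEq.add_right_cancel' n ?_
      have h4 : (r - n) + n = r := by omega
      have h5 : (a - n) + n = a := by omega
      rw [h4, h5]; exact hra)
    (by
      refine Nat.ModEq.add_right_cancel' n ?_
      have h4 : (r - n) + n = r := by omega
      have h5 : (a - n) + n = a := by omega
      rw [h4, h5]; exact hrap)
  rw [hc, mul_zero]

lemma my_two_choose (x : ℕ) (h : 1 ≤ x) : 2 * (x.choose 2 : ℤ) = (x : ℤ) * ((x : ℤ) - 1) := by
  have h1 : Even (x * (x - 1)) := by
    rcases Nat.even_or_odd x with he | ho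
    · exact he.mul_right _
    · have : Even (x - 1) := by
        rcases ho with ⟨k, hk⟩; exact ⟨k, by omega⟩
      exact this.mul_left _
  have h2 : 2 * x.choose 2 = x * (x - 1) := by
    rw [Nat.choose_two_right]
    exact Nat.mul_div_cancel' h1.two_dvd
  have := congrArg (fun z : ℕ => (z : ℤ)) h2
  push_cast [Nat.cast_sub h] at this
  linarith

lemma my_exists_inv (k N : ℕ) (h : Nat.Coprime k N) :
    ∃ v : ℤ, (k : ℤ) * v ≡ 1 [ZMOD (N : ℤ)] := by
  obtain ⟨u, w, huv⟩ := Nat.isCoprime_iff_coprime.mpr h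
  exact ⟨u, (Int.modEq_iff_dvd).mpr ⟨w, by linarith⟩⟩

/-- For a prime `p ≥ 5`, `a ∈ {4,…,p+1}` and `r ≡ a (mod p-1)`, `r ≡ a (mod p)`,
`r > (a-1)p`, there exist integers `β_j` (for `a-1 ≤ j < r-1`, `j ≡ a-1 (mod p-1)`)
congruent to `C(r,j)` mod `p` with the weighted sums `∑ C(j,n) β_j` vanishing
mod `p^{4-n}` for `n = 0,1,2,3`. -/
theorem exists_beta (p : ℕ) (hp : p.Prime) (hp5 : 5 ≤ p) (a r : ℕ)
    (ha : 4 ≤ a) (ha' : a ≤ p + 1)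
    (hra : r ≡ a [MOD p - 1]) (hrap : r ≡ a [MOD p]) (hr : (a - 1) * p < r) :
    ∃ β : ℕ → ℤ,
      (∀ j ∈ (Finset.Ico (a - 1) (r - 1)).filter
          (fun j => j % (p - 1) = (a - 1) % (p - 1)),
        β j ≡ (r.choose j : ℤ) [ZMOD (p : ℤ)]) ∧
      (∀ n ≤ 3,
        (∑ j ∈ ((Finset.Ico (a - 1) (r - 1)).filter
            (fun j => j % (p - 1) = (a - 1) % (p - 1) ∧ n ≤ j)),
          (j.choose n : ℤ) * β j) ≡ 0 [ZMOD (p : ℤ) ^ (4 - n)]) := by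
  haveI : Fact p.Prime := ⟨hp⟩
  classical
  have hrbig : a + 2 * p ≤ r + 1 := my_rbound p a r hp5 ha ha' hr
  set j0 := a - 1 with hj0
  set j1 := a - 1 + (p - 1) with hj1
  set j2 := a - 1 + 2 * (p - 1) with hj2
  set S : ℕ → ℤ := fun k =>
    ∑ j ∈ ((Finset.Ico (a - 1) (r - 1)).filter
      (fun j => j % (p - 1) = (a - 1) % (p - 1) ∧ k ≤ j)),
      (j.choose k : ℤ) * (r.choose j : ℤ) with hS
  have hdvd : ∀ k, k ≤ 3 → (p : ℤ) ∣ S k := fun k hk =>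
    my_Svanish p hp5 a r k ha ha' hk hra hrap hr
  set t : ℕ → ℤ := fun k => S k / p with ht
  have hSt : ∀ k, k ≤ 3 → (p : ℤ) * t k = S k := fun k hk =>
    Int.mul_ediv_cancel' (hdvd k hk)
  have hcop : Nat.Coprime (p - 1) p := by
    have h1 : Nat.Coprime (p - 1) (1 + (p - 1)) := by
      rw [Nat.coprime_add_self_right]
      exact Nat.coprime_one_right _
    have h0 : 1 + (p - 1) = p := by omega
    rwa [h0] at h1
  obtain ⟨v1, hv1⟩ := my_exists_inv (p - 1) (p ^ 2) (hcop.pow_right 2)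
  obtain ⟨v2, hv2⟩ := my_exists_inv ((p - 1) * (p - 1)) p (hcop.mul hcop)
  set γ : ℤ := -(t 0) with hγ
  set B : ℤ := v1 * (t 1 + γ * (j2 : ℤ)) with hB
  set Δ : ℤ := (j1.choose 2 : ℤ) - (j2.choose 2 : ℤ) with hΔ
  set A : ℤ := v2 * (-(t 2 + B * Δ + γ * (j2.choose 2 : ℤ))) with hA
  set y : ℕ → ℤ := fun j =>
    if j = j0 then A else if j = j1 then B - 2 * A else if j = j2 then A - B + γ else 0 with hy
  refine ⟨fun j => (r.choose j : ℤ) + (p : ℤ) * y j, ?_, ?_⟩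
  · intro j _
    exact (Int.modEq_iff_dvd).mpr ⟨-(y j), by ring⟩
  · intro n hn
    have hy0 : y j0 = A := by simp [hy]
    have hy1 : y j1 = B - 2 * A := by
      simp [hy, show j1 ≠ j0 by omega]
    have hy2 : y j2 = A - B + γ := by
      simp [hy, show j2 ≠ j0 by omega, show j2 ≠ j1 by omega]
    have hmem : ∀ k, k % (p - 1) = (a - 1) % (p - 1) → a - 1 ≤ k → k < r - 1 →
        k ∈ (Finset.Ico (a - 1) (r - 1)).filter
          (fun j => j % (p - 1) = (a - 1) % (p - 1) ∧ n ≤ j) := by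
      intro k h1 h2 h3
      simp only [Finset.mem_filter, Finset.mem_Ico]
      exact ⟨⟨h2, h3⟩, h1, by omega⟩
    have hj0mem := hmem j0 (by rw [hj0]) (by omega) (by omega)
    have hj1mem := hmem j1 (by rw [hj1]; exact Nat.add_mod_right _ _) (by omega) (by omega)
    have hj2mem := hmem j2 (by rw [hj2]; exact Nat.add_mul_mod_self_right ..) (by omega) (by omega)
    have hsub : ({j0, j1, j2} : Finset ℕ) ⊆ (Finset.Ico (a - 1) (r - 1)).filter
        (fun j => j % (p - 1) = (a - 1) % (p - 1) ∧ n ≤ j) := by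
      intro x hx
      simp only [Finset.mem_insert, Finset.mem_singleton] at hx
      rcases hx with h | h | h <;> subst h
      · exact hj0mem
      · exact hj1mem
      · exact hj2mem
    have hLsum : ∑ j ∈ ((Finset.Ico (a - 1) (r - 1)).filter
          (fun j => j % (p - 1) = (a - 1) % (p - 1) ∧ n ≤ j)),
          (j.choose n : ℤ) * y j
        = (j0.choose n : ℤ) * A + (j1.choose n : ℤ) * (B - 2 * A)
            + (j2.choose n : ℤ) * (A - B + γ) := by
      rw [← Finset.sum_subset hsub ?_]
      · rw [Finset.sum_insert (by
            simp only [Finset.mem_insert, Finset.mem_singleton]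
            push_neg
            omega),
          Finset.sum_pair (by omega : j1 ≠ j2), hy0, hy1, hy2]
        ring
      · intro x _ hxn
        simp only [Finset.mem_insert, Finset.mem_singleton] at hxn
        push_neg at hxn
        rw [hy]
        simp only [if_neg hxn.1, if_neg hxn.2.1, if_neg hxn.2.2, mul_zero]
    have hgoal : ∑ j ∈ ((Finset.Ico (a - 1) (r - 1)).filter
          (fun j => j % (p - 1) = (a - 1) % (p - 1) ∧ n ≤ j)),
          (j.choose n : ℤ) * ((r.choose j : ℤ) + (p : ℤ) * y j)
        = S n + (p : ℤ) * ∑ j ∈ ((Finset.Ico (a - 1) (r - 1)).filter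
          (fun j => j % (p - 1) = (a - 1) % (p - 1) ∧ n ≤ j)),
          (j.choose n : ℤ) * y j := by
      rw [hS]
      simp only []
      rw [Finset.mul_sum, ← Finset.sum_add_distrib]
      exact Finset.sum_congr rfl fun j _ => by ring
    rw [Int.modEq_zero_iff_dvd, hgoal, hLsum, ← hSt n hn]
    interval_cases n
    · -- n = 0
      have hz : (p : ℤ) * t 0 + (p : ℤ) * ((j0.choose 0 : ℤ) * A + (j1.choose 0 : ℤ) * (B - 2 * A)
          + (j2.choose 0 : ℤ) * (A - B + γ)) = 0 := by
        simp only [Nat.choose_zero_right, Nat.cast_one]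
        rw [hγ]; ring
      rw [hz]
      exact dvd_zero _
    · -- n = 1
      suffices h : (p : ℤ) ^ 2 ∣ t 1 + ((j0 : ℤ) * A + (j1 : ℤ) * (B - 2 * A)
          + (j2 : ℤ) * (A - B + γ)) by
        obtain ⟨w, hw⟩ := h
        refine ⟨w, ?_⟩
        simp only [Nat.choose_one_right]
        linear_combination (p : ℤ) * hw
      have hcast1 : (j1 : ℤ) = (j0 : ℤ) + ((p - 1 : ℕ) : ℤ) := by
        rw [hj1, hj0]; push_cast; ring
      have hcast2 : (j2 : ℤ) = (j0 : ℤ) + 2 * ((p - 1 : ℕ) : ℤ) := by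
        rw [hj2, hj0]; push_cast; ring
      have hL : t 1 + ((j0 : ℤ) * A + (j1 : ℤ) * (B - 2 * A) + (j2 : ℤ) * (A - B + γ))
          = (t 1 + γ * (j2 : ℤ)) - ((p - 1 : ℕ) : ℤ) * B := by
        rw [hcast1, hcast2]
        ring
      rw [hL]
      obtain ⟨w, hw⟩ := Int.ModEq.dvd (hv1.mul_right (t 1 + γ * (j2 : ℤ)))
      push_cast at hw
      refine ⟨w, ?_⟩
      rw [hB]
      linear_combination hw
    · -- n = 2
      suffices h : (p : ℤ) ∣ t 2 + ((j0.choose 2 : ℤ) * A + (j1.choose 2 : ℤ) * (B - 2 * A)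
          + (j2.choose 2 : ℤ) * (A - B + γ)) by
        obtain ⟨w, hw⟩ := h
        refine ⟨w, ?_⟩
        linear_combination (p : ℤ) * hw
      have hcast1 : (j1 : ℤ) = (j0 : ℤ) + ((p - 1 : ℕ) : ℤ) := by
        rw [hj1, hj0]; push_cast; ring
      have hcast2 : (j2 : ℤ) = (j0 : ℤ) + 2 * ((p - 1 : ℕ) : ℤ) := by
        rw [hj2, hj0]; push_cast; ring
      have e0 := my_two_choose j0 (by omega)
      have e1 := my_two_choose j1 (by omega)
      have e2 := my_two_choose j2 (by omega)
      rw [hcast1] at e1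
      rw [hcast2] at e2
      have h2eq : 2 * (t 2 + ((j0.choose 2 : ℤ) * A + (j1.choose 2 : ℤ) * (B - 2 * A)
            + (j2.choose 2 : ℤ) * (A - B + γ)))
          = 2 * ((t 2 + B * Δ + γ * (j2.choose 2 : ℤ)) + A * ((p - 1 : ℕ) : ℤ) ^ 2) := by
        rw [hΔ]
        linear_combination A * e0 - 2 * A * e1 + A * e2
      have hL : t 2 + ((j0.choose 2 : ℤ) * A + (j1.choose 2 : ℤ) * (B - 2 * A)
            + (j2.choose 2 : ℤ) * (A - B + γ))
          = (t 2 + B * Δ + γ * (j2.choose 2 : ℤ)) + A * ((p - 1 : ℕ) : ℤ) ^ 2 :=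
        mul_left_cancel₀ two_ne_zero h2eq
      rw [hL]
      obtain ⟨w, hw⟩ := Int.ModEq.dvd (hv2.mul_right (t 2 + B * Δ + γ * (j2.choose 2 : ℤ)))
      push_cast at hw
      refine ⟨w, ?_⟩
      rw [hA]
      linear_combination hw
    · -- n = 3
      refine ⟨t 3 + ((j0.choose 3 : ℤ) * A + (j1.choose 3 : ℤ) * (B - 2 * A)
          + (j2.choose 3 : ℤ) * (A - B + γ)), ?_⟩
      ring
end
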